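/- arXiv:1408.1533 — 2 statements merged into one kernel-verified Lean document; each statement's English description precedes it below -/
import Mathlib

section
/- Let k ≥ 2 be an integer. There is a constant C = C(k) > 0 such that for all integers N ≥ 2 the following holds: if H and h are the integers determined by N^{1/k} ≤ 2^H < 2N^{1/k} and N^{1/(k+1)} < 2^h ≤ 2N^{1/(k+1)}, then the exponential sum T*(α) = ∑_{n ≤ N} b_{2^h,2^H}(n) e(αn) satisfies ∫₀¹ |T*(α)|² dα ≤ C · N^{2/(k+1)}. -/
noncomputable def e (x : ℝ) : ℂ := Complex.exp (2 * Real.pi * Complex.I * x)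

open Classical in
/-- `b k y z n = ∑_{d^k ∣ n, y ≤ d < z} μ(d)` for `n ≥ 1`, and `b k y z 0 = 0`. -/
noncomputable def b (k : ℕ) (y z : ℝ) (n : ℕ) : ℤ :=
  ∑ d ∈ (Finset.Icc 1 n).filter (fun d : ℕ => y ≤ (d : ℝ) ∧ (d : ℝ) < z ∧ d ^ k ∣ n),
    ArithmeticFunction.moebius d

/-- The exponential sum `T*(α) = ∑_{n ≤ N} b_{2^h,2^H}(n) e(αn)`. -/
noncomputable def Tstar (k N h H : ℕ) (α : ℝ) : ℂ :=
  ∑ n ∈ Finset.Icc 1 N, (b k ((2 : ℝ) ^ h) ((2 : ℝ) ^ H) n : ℂ) * e (α * n)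

open Finset intervalIntegral

/-! ### Orthogonality and Parseval -/

lemma integral_e (j : ℤ) :
    (∫ α in (0:ℝ)..1, Complex.exp (2 * Real.pi * Complex.I * j * α)) =
      if j = 0 then 1 else 0 := by
  rcases eq_or_ne j 0 with h | h
  · simp [h]
  · have hc : (2 * Real.pi * Complex.I * j : ℂ) ≠ 0 := by
      simp [Real.pi_ne_zero, Complex.I_ne_zero, h]
    rw [if_neg h, integral_exp_mul_complex (a := 0) (b := 1) hc]
    have h1 : Complex.exp (2 * Real.pi * Complex.I * j) = 1 := by
      rw [show (2 * (Real.pi:ℂ) * Complex.I * j) = (j : ℂ) * (2 * Real.pi * Complex.I) by ring]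
      exact Complex.exp_int_mul_two_pi_mul_I j
    simp only [Complex.ofReal_one, Complex.ofReal_zero, mul_zero, mul_one, Complex.exp_zero, h1,
      sub_self, zero_div]

lemma e_mul_conj (α : ℝ) (n m : ℕ) :
    e (α * n) * (starRingEnd ℂ) (e (α * m)) =
      Complex.exp (2 * Real.pi * Complex.I * (((n:ℤ) - m : ℤ) : ℂ) * α) := by
  unfold e
  rw [← Complex.exp_conj, ← Complex.exp_add]
  congr 1
  simp only [map_mul, Complex.conj_I, Complex.conj_ofReal, map_ofNat]
  push_cast
  ring

lemma parseval (N : ℕ) (c : ℕ → ℂ) :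
    (∫ α in (0:ℝ)..1, ‖∑ n ∈ Icc 1 N, c n * e (α * n)‖ ^ 2) =
      ∑ n ∈ Icc 1 N, ‖c n‖ ^ 2 := by
  have hpt : ∀ α : ℝ, ((‖∑ n ∈ Icc 1 N, c n * e (α * n)‖ ^ 2 : ℝ) : ℂ)
      = ∑ n ∈ Icc 1 N, ∑ m ∈ Icc 1 N,
          (c n * (starRingEnd ℂ) (c m)) *
            Complex.exp (2 * Real.pi * Complex.I * (((n:ℤ) - m : ℤ) : ℂ) * α) := by
    intro α
    have h1 : ((‖∑ n ∈ Icc 1 N, c n * e (α * n)‖ ^ 2 : ℝ) : ℂ)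
        = (∑ n ∈ Icc 1 N, c n * e (α * n)) *
          (starRingEnd ℂ) (∑ m ∈ Icc 1 N, c m * e (α * m)) := by
      rw [Complex.mul_conj]
      norm_cast
      rw [Complex.normSq_eq_norm_sq]
    rw [h1, map_sum, Finset.sum_mul_sum]
    refine Finset.sum_congr rfl fun n _ => Finset.sum_congr rfl fun m _ => ?_
    rw [map_mul, ← e_mul_conj α n m]
    ring
  have key : (∫ α in (0:ℝ)..1,
      ((‖∑ n ∈ Icc 1 N, c n * e (α * n)‖ ^ 2 : ℝ) : ℂ))
      = ↑(∑ n ∈ Icc 1 N, ‖c n‖ ^ 2) := by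
    simp only [hpt]
    rw [intervalIntegral.integral_finset_sum]
    · have : ∀ n ∈ Icc 1 N, (∫ α in (0:ℝ)..1, ∑ m ∈ Icc 1 N,
          (c n * (starRingEnd ℂ) (c m)) *
            Complex.exp (2 * Real.pi * Complex.I * (((n:ℤ) - m : ℤ) : ℂ) * α))
          = ((‖c n‖ ^ 2 : ℝ) : ℂ) := by
        intro n hn
        rw [intervalIntegral.integral_finset_sum]
        · have : ∀ m ∈ Icc 1 N, (∫ α in (0:ℝ)..1,
              (c n * (starRingEnd ℂ) (c m)) *
                Complex.exp (2 * Real.pi * Complex.I * (((n:ℤ) - m : ℤ) : ℂ) * α))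
              = if m = n then c n * (starRingEnd ℂ) (c n) else 0 := by
            intro m _
            rw [intervalIntegral.integral_const_mul, integral_e]
            rcases eq_or_ne m n with h | h
            · simp [h]
            · rw [if_neg, if_neg h, mul_zero]
              simp only [sub_eq_zero, Int.natCast_inj]
              exact fun hnm => h hnm.symm
          rw [Finset.sum_congr rfl this, Finset.sum_ite_eq' (Icc 1 N) n
            (fun _ => c n * (starRingEnd ℂ) (c n)), if_pos hn, Complex.mul_conj,
            Complex.normSq_eq_norm_sq]
        · intro m _
          exact Continuous.intervalIntegrable (by fun_prop) 0 1
      rw [Finset.sum_congr rfl this]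
      push_cast
      rfl
    · intro n _
      exact Continuous.intervalIntegrable (by fun_prop) 0 1
  rw [intervalIntegral.integral_ofReal] at key
  exact_mod_cast key

/-! ### Elementary sum estimates -/

lemma step_ineq (j : ℕ) {x : ℝ} (hx : 1 ≤ x) :
    (x ^ (j+2))⁻¹ ≤ 2 ^ (j+2) * ((x ^ (j+1))⁻¹ - ((x+1) ^ (j+1))⁻¹) := by
  have px : (0:ℝ) < x := lt_of_lt_of_le one_pos hx
  have h1 : x ^ (j+1) + x ^ j ≤ (x+1) ^ (j+1) := by
    have hbase := one_add_mul_le_pow (a := 1/x)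
      (by have := one_div_pos.mpr px; linarith : (-2:ℝ) ≤ 1/x) (j+1)
    push_cast at hbase
    have h' : x ^ (j+1) * (1 + ((j:ℝ)+1) * (1/x)) ≤ x ^ (j+1) * (1 + 1/x) ^ (j+1) :=
      mul_le_mul_of_nonneg_left hbase (by positivity)
    have e2 : x ^ (j+1) * (1 + 1/x) ^ (j+1) = (x+1) ^ (j+1) := by
      rw [← mul_pow]; congr 1; field_simp
    have e3 : x ^ (j+1) * (1 + ((j:ℝ)+1) * (1/x)) = x ^ (j+1) + ((j:ℝ)+1) * x ^ j := by
      field_simp; ring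
    rw [e2, e3] at h'
    nlinarith [pow_nonneg px.le j, Nat.cast_nonneg (α := ℝ) j]
  have h2 : (x+1) ^ (j+1) ≤ 2 ^ (j+1) * x ^ (j+1) := by
    calc (x+1) ^ (j+1) ≤ (2*x) ^ (j+1) := by
          apply pow_le_pow_left₀ (by positivity)
          linarith
      _ = 2 ^ (j+1) * x ^ (j+1) := by rw [mul_pow]
  have e1 : (x ^ (j+1))⁻¹ - ((x+1) ^ (j+1))⁻¹
      = ((x+1) ^ (j+1) - x ^ (j+1)) / (x ^ (j+1) * (x+1) ^ (j+1)) := by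
    have p1 : (0:ℝ) < x ^ (j+1) := by positivity
    have p2 : (0:ℝ) < (x+1) ^ (j+1) := by positivity
    field_simp
  rw [e1]
  have hD : x ^ j ≤ (x+1) ^ (j+1) - x ^ (j+1) := by linarith
  have key : x ^ j / (2 ^ (j+1) * x ^ (2*j+2))
      ≤ ((x+1) ^ (j+1) - x ^ (j+1)) / (x ^ (j+1) * (x+1) ^ (j+1)) := by
    apply div_le_div₀ (by linarith [pow_nonneg px.le j, pow_nonneg px.le (j+1)]) hD
      (by positivity)
    calc x ^ (j+1) * (x+1) ^ (j+1) ≤ x ^ (j+1) * (2 ^ (j+1) * x ^ (j+1)) :=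
          mul_le_mul_of_nonneg_left h2 (by positivity)
      _ = 2 ^ (j+1) * x ^ (2*j+2) := by ring
  calc (x ^ (j+2))⁻¹ ≤ 2 ^ (j+2) * (x ^ j / (2 ^ (j+1) * x ^ (2*j+2))) := by
        have : 2 ^ (j+2) * (x ^ j / (2 ^ (j+1) * x ^ (2*j+2))) = 2 * (x ^ (j+2))⁻¹ := by
          rw [eq_comm]
          field_simp
          ring
        rw [this]
        have : (0:ℝ) ≤ (x ^ (j+2))⁻¹ := by positivity
        linarith
    _ ≤ 2 ^ (j+2) * (((x+1) ^ (j+1) - x ^ (j+1)) / (x ^ (j+1) * (x+1) ^ (j+1))) :=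
        mul_le_mul_of_nonneg_left key (by positivity)

lemma tail_sum (j N : ℕ) {A : ℝ} (hA : 1 ≤ A) :
    ∑ a ∈ (Icc 1 N).filter (fun a : ℕ => A ≤ (a:ℝ)), ((a:ℝ) ^ (j+2))⁻¹
      ≤ 2 ^ (j+2) * (A ^ (j+1))⁻¹ := by
  have hA0 : (0:ℝ) < A := lt_of_lt_of_le one_pos hA
  set m := ⌈A⌉₊ with hm
  have hm1 : 1 ≤ m := Nat.one_le_iff_ne_zero.mpr (by
    simp [hm, Nat.ceil_eq_zero, not_le, hA0])
  have hmA : A ≤ (m:ℝ) := Nat.le_ceil A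
  have hsub : (Icc 1 N).filter (fun a : ℕ => A ≤ (a:ℝ)) ⊆ Icc m N := by
    intro a ha
    simp only [mem_filter, mem_Icc] at ha ⊢
    exact ⟨Nat.ceil_le.mpr ha.2, ha.1.2⟩
  have gnonneg : ∀ a : ℕ, (0:ℝ) ≤ ((a:ℝ) ^ (j+1))⁻¹ := fun a => by positivity
  calc ∑ a ∈ (Icc 1 N).filter (fun a : ℕ => A ≤ (a:ℝ)), ((a:ℝ) ^ (j+2))⁻¹
      ≤ ∑ a ∈ Icc m N, ((a:ℝ) ^ (j+2))⁻¹ :=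
        Finset.sum_le_sum_of_subset_of_nonneg hsub (fun a _ _ => by positivity)
    _ ≤ ∑ a ∈ Icc m N, 2 ^ (j+2) * ((((a:ℕ):ℝ) ^ (j+1))⁻¹ - ((((a+1:ℕ)):ℝ) ^ (j+1))⁻¹) := by
        apply Finset.sum_le_sum
        intro a ha
        have ha1 : 1 ≤ a := le_trans hm1 (mem_Icc.mp ha).1
        have : (1:ℝ) ≤ (a:ℝ) := by exact_mod_cast ha1
        have := step_ineq j this
        push_cast
        push_cast at this
        convert this using 4
    _ = 2 ^ (j+2) * ∑ a ∈ Icc m N, ((((a:ℕ):ℝ) ^ (j+1))⁻¹ - ((((a+1:ℕ)):ℝ) ^ (j+1))⁻¹) := by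
        rw [Finset.mul_sum]
    _ ≤ 2 ^ (j+2) * (((m:ℝ)) ^ (j+1))⁻¹ := by
        apply mul_le_mul_of_nonneg_left _ (by positivity)
        rw [← Finset.Ico_add_one_right_eq_Icc, Finset.sum_Ico_eq_sum_range]
        have tel : ∑ i ∈ Finset.range (N + 1 - m),
            (((((m + i:ℕ)):ℝ) ^ (j+1))⁻¹ - ((((m + i + 1:ℕ)):ℝ) ^ (j+1))⁻¹)
            = (((m:ℕ):ℝ) ^ (j+1))⁻¹ - ((((m + (N+1-m):ℕ)):ℝ) ^ (j+1))⁻¹ :=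
          Finset.sum_range_sub' (fun i => (((m + i : ℕ):ℝ) ^ (j+1))⁻¹) (N + 1 - m)
        rw [tel]
        have := gnonneg (m + (N+1-m))
        linarith
    _ ≤ 2 ^ (j+2) * (A ^ (j+1))⁻¹ := by
        apply mul_le_mul_of_nonneg_left _ (by positivity)
        apply inv_anti₀ (by positivity)
        exact pow_le_pow_left₀ hA0.le hmA _

open Classical in
lemma inner_sum_le (j N : ℕ) {y : ℝ} (hy : 1 ≤ y) (g : ℕ) (hg : 1 ≤ g) :
    ∑ a ∈ Icc 1 N, (if y ≤ (g:ℝ) * (a:ℝ) then ((a:ℝ) ^ (j+2))⁻¹ else 0)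
      ≤ if (g:ℝ) ≤ y then 2 ^ (j+2) * ((y/(g:ℝ)) ^ (j+1))⁻¹ else 2 ^ (j+2) := by
  have hg0 : (0:ℝ) < (g:ℝ) := by exact_mod_cast hg
  rw [← Finset.sum_filter]
  split_ifs with hgy
  · have hfe : (Icc 1 N).filter (fun a : ℕ => y ≤ (g:ℝ) * (a:ℝ))
        = (Icc 1 N).filter (fun a : ℕ => y/(g:ℝ) ≤ (a:ℝ)) := by
      apply Finset.filter_congr
      intro a _
      rw [div_le_iff₀ hg0]
      constructor
      · intro hh; linarith [mul_comm (g:ℝ) (a:ℝ)]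
      · intro hh; linarith [mul_comm (g:ℝ) (a:ℝ)]
    rw [hfe]
    exact tail_sum j N ((one_le_div₀ hg0).mpr hgy)
  · calc ∑ a ∈ (Icc 1 N).filter (fun a : ℕ => y ≤ (g:ℝ) * (a:ℝ)), ((a:ℝ) ^ (j+2))⁻¹
        ≤ ∑ a ∈ (Icc 1 N).filter (fun a : ℕ => (1:ℝ) ≤ (a:ℝ)), ((a:ℝ) ^ (j+2))⁻¹ := by
          apply Finset.sum_le_sum_of_subset_of_nonneg
          · intro a ha
            simp only [mem_filter, mem_Icc] at ha ⊢
            refine ⟨ha.1, ?_⟩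
            have : (1:ℕ) ≤ a := ha.1.1
            exact_mod_cast this
          · intro a _ _; positivity
      _ ≤ 2 ^ (j+2) * ((1:ℝ) ^ (j+1))⁻¹ := tail_sum j N le_rfl
      _ = 2 ^ (j+2) := by norm_num

open Classical in
lemma triple_sum_le (j N : ℕ) {y : ℝ} (hy : 1 ≤ y) :
    ∑ g ∈ Icc 1 N, ((g:ℝ)^(j+2))⁻¹ *
      (∑ a ∈ Icc 1 N, (if y ≤ (g:ℝ)*(a:ℝ) then ((a:ℝ)^(j+2))⁻¹ else 0)) *
      (∑ b2 ∈ Icc 1 N, (if y ≤ (g:ℝ)*(b2:ℝ) then ((b2:ℝ)^(j+2))⁻¹ else 0))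
      ≤ 2 * 8^(j+2) * (y^(j+1))⁻¹ := by
  have hy0 : (0:ℝ) < y := lt_of_lt_of_le one_pos hy
  have hSnn : ∀ g : ℕ, 0 ≤ ∑ a ∈ Icc 1 N, (if y ≤ (g:ℝ)*(a:ℝ) then ((a:ℝ)^(j+2))⁻¹ else 0) := by
    intro g
    apply Finset.sum_nonneg
    intro a _
    split_ifs <;> positivity
  rw [← Finset.sum_filter_add_sum_filter_not (Icc 1 N) (fun g : ℕ => (g:ℝ) ≤ y)]
  have part1 : ∑ g ∈ (Icc 1 N).filter (fun g : ℕ => (g:ℝ) ≤ y), ((g:ℝ)^(j+2))⁻¹ *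
      (∑ a ∈ Icc 1 N, (if y ≤ (g:ℝ)*(a:ℝ) then ((a:ℝ)^(j+2))⁻¹ else 0)) *
      (∑ b2 ∈ Icc 1 N, (if y ≤ (g:ℝ)*(b2:ℝ) then ((b2:ℝ)^(j+2))⁻¹ else 0))
      ≤ 4^(j+2) * (y^(j+1))⁻¹ := by
    have hterm : ∀ g ∈ (Icc 1 N).filter (fun g : ℕ => (g:ℝ) ≤ y),
        ((g:ℝ)^(j+2))⁻¹ *
          (∑ a ∈ Icc 1 N, (if y ≤ (g:ℝ)*(a:ℝ) then ((a:ℝ)^(j+2))⁻¹ else 0)) *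
          (∑ b2 ∈ Icc 1 N, (if y ≤ (g:ℝ)*(b2:ℝ) then ((b2:ℝ)^(j+2))⁻¹ else 0))
        ≤ 4^(j+2) * y^j * (y^(2*j+2))⁻¹ := by
      intro g hgmem
      simp only [mem_filter, mem_Icc] at hgmem
      obtain ⟨⟨hg1, hgN⟩, hgy⟩ := hgmem
      have hg0 : (0:ℝ) < (g:ℝ) := by exact_mod_cast hg1
      have hg1' : (1:ℝ) ≤ (g:ℝ) := by exact_mod_cast hg1
      have hinner := inner_sum_le j N hy g hg1
      rw [if_pos hgy] at hinner
      have hb : 2^(j+2) * ((y/(g:ℝ))^(j+1))⁻¹ = 2^(j+2) * (g:ℝ)^(j+1) * (y^(j+1))⁻¹ := by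
        rw [div_pow, inv_div]
        field_simp
      rw [hb] at hinner
      have hBnn : (0:ℝ) ≤ 2^(j+2) * (g:ℝ)^(j+1) * (y^(j+1))⁻¹ := by positivity
      calc ((g:ℝ)^(j+2))⁻¹ *
          (∑ a ∈ Icc 1 N, (if y ≤ (g:ℝ)*(a:ℝ) then ((a:ℝ)^(j+2))⁻¹ else 0)) *
          (∑ b2 ∈ Icc 1 N, (if y ≤ (g:ℝ)*(b2:ℝ) then ((b2:ℝ)^(j+2))⁻¹ else 0))
          ≤ ((g:ℝ)^(j+2))⁻¹ * (2^(j+2) * (g:ℝ)^(j+1) * (y^(j+1))⁻¹)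
            * (2^(j+2) * (g:ℝ)^(j+1) * (y^(j+1))⁻¹) := by
            apply mul_le_mul _ hinner (hSnn g) (by positivity)
            exact mul_le_mul_of_nonneg_left hinner (by positivity)
        _ = 4^(j+2) * (g:ℝ)^j * (y^(2*j+2))⁻¹ := by
            have hgne : (g:ℝ) ≠ 0 := hg0.ne'
            have hyne : (y:ℝ) ≠ 0 := hy0.ne'
            have e1 : (4:ℝ)^(j+2) = 2^(j+2) * 2^(j+2) := by rw [← mul_pow]; norm_num
            rw [e1]
            field_simp
            ring
        _ ≤ 4^(j+2) * y^j * (y^(2*j+2))⁻¹ := by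
            apply mul_le_mul_of_nonneg_right _ (by positivity)
            apply mul_le_mul_of_nonneg_left _ (by positivity)
            exact pow_le_pow_left₀ hg0.le hgy j
    calc ∑ g ∈ (Icc 1 N).filter (fun g : ℕ => (g:ℝ) ≤ y), ((g:ℝ)^(j+2))⁻¹ *
        (∑ a ∈ Icc 1 N, (if y ≤ (g:ℝ)*(a:ℝ) then ((a:ℝ)^(j+2))⁻¹ else 0)) *
        (∑ b2 ∈ Icc 1 N, (if y ≤ (g:ℝ)*(b2:ℝ) then ((b2:ℝ)^(j+2))⁻¹ else 0))
        ≤ ((Icc 1 N).filter (fun g : ℕ => (g:ℝ) ≤ y)).card • (4^(j+2) * y^j * (y^(2*j+2))⁻¹) :=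
          Finset.sum_le_card_nsmul _ _ _ hterm
      _ ≤ y * (4^(j+2) * y^j * (y^(2*j+2))⁻¹) := by
          rw [nsmul_eq_mul]
          apply mul_le_mul_of_nonneg_right _ (by positivity)
          have hsub : (Icc 1 N).filter (fun g : ℕ => (g:ℝ) ≤ y) ⊆ Icc 1 ⌊y⌋₊ := by
            intro g hg
            simp only [mem_filter, mem_Icc] at hg ⊢
            exact ⟨hg.1.1, Nat.le_floor hg.2⟩
          calc ((((Icc 1 N).filter (fun g : ℕ => (g:ℝ) ≤ y)).card : ℝ))
              ≤ ((Icc 1 ⌊y⌋₊).card : ℝ) := by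
                exact_mod_cast Finset.card_le_card hsub
            _ ≤ y := by
                rw [Nat.card_Icc]
                simp only [Nat.add_sub_cancel]
                exact (Nat.floor_le hy0.le)
      _ = 4^(j+2) * (y^(j+1))⁻¹ := by
          have : y^(2*j+2) = y^(j+1) * y^(j+1) := by rw [← pow_add]; congr 1; ring
          rw [this]
          have h1 : y^(j+1) ≠ 0 := by positivity
          field_simp
          ring
  have part2 : ∑ g ∈ (Icc 1 N).filter (fun g : ℕ => ¬ (g:ℝ) ≤ y), ((g:ℝ)^(j+2))⁻¹ *
      (∑ a ∈ Icc 1 N, (if y ≤ (g:ℝ)*(a:ℝ) then ((a:ℝ)^(j+2))⁻¹ else 0)) *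
      (∑ b2 ∈ Icc 1 N, (if y ≤ (g:ℝ)*(b2:ℝ) then ((b2:ℝ)^(j+2))⁻¹ else 0))
      ≤ 8^(j+2) * (y^(j+1))⁻¹ := by
    have hterm : ∀ g ∈ (Icc 1 N).filter (fun g : ℕ => ¬ (g:ℝ) ≤ y),
        ((g:ℝ)^(j+2))⁻¹ *
          (∑ a ∈ Icc 1 N, (if y ≤ (g:ℝ)*(a:ℝ) then ((a:ℝ)^(j+2))⁻¹ else 0)) *
          (∑ b2 ∈ Icc 1 N, (if y ≤ (g:ℝ)*(b2:ℝ) then ((b2:ℝ)^(j+2))⁻¹ else 0))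
        ≤ 4^(j+2) * ((g:ℝ)^(j+2))⁻¹ := by
      intro g hgmem
      simp only [mem_filter, mem_Icc] at hgmem
      obtain ⟨⟨hg1, hgN⟩, hgy⟩ := hgmem
      have hinner := inner_sum_le j N hy g hg1
      rw [if_neg hgy] at hinner
      calc ((g:ℝ)^(j+2))⁻¹ *
          (∑ a ∈ Icc 1 N, (if y ≤ (g:ℝ)*(a:ℝ) then ((a:ℝ)^(j+2))⁻¹ else 0)) *
          (∑ b2 ∈ Icc 1 N, (if y ≤ (g:ℝ)*(b2:ℝ) then ((b2:ℝ)^(j+2))⁻¹ else 0))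
          ≤ ((g:ℝ)^(j+2))⁻¹ * 2^(j+2) * 2^(j+2) := by
            apply mul_le_mul _ hinner (hSnn g) (by positivity)
            exact mul_le_mul_of_nonneg_left hinner (by positivity)
        _ = 4^(j+2) * ((g:ℝ)^(j+2))⁻¹ := by
            rw [show ((g:ℝ)^(j+2))⁻¹ * 2^(j+2) * 2^(j+2) = (2*2:ℝ)^(j+2) * ((g:ℝ)^(j+2))⁻¹ by
              rw [mul_pow]; ring]
            norm_num
    calc ∑ g ∈ (Icc 1 N).filter (fun g : ℕ => ¬ (g:ℝ) ≤ y), ((g:ℝ)^(j+2))⁻¹ *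
        (∑ a ∈ Icc 1 N, (if y ≤ (g:ℝ)*(a:ℝ) then ((a:ℝ)^(j+2))⁻¹ else 0)) *
        (∑ b2 ∈ Icc 1 N, (if y ≤ (g:ℝ)*(b2:ℝ) then ((b2:ℝ)^(j+2))⁻¹ else 0))
        ≤ ∑ g ∈ (Icc 1 N).filter (fun g : ℕ => ¬ (g:ℝ) ≤ y), 4^(j+2) * ((g:ℝ)^(j+2))⁻¹ :=
          Finset.sum_le_sum hterm
      _ = 4^(j+2) * ∑ g ∈ (Icc 1 N).filter (fun g : ℕ => ¬ (g:ℝ) ≤ y), ((g:ℝ)^(j+2))⁻¹ := by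
          rw [Finset.mul_sum]
      _ ≤ 4^(j+2) * (2^(j+2) * (y^(j+1))⁻¹) := by
          apply mul_le_mul_of_nonneg_left _ (by positivity)
          calc ∑ g ∈ (Icc 1 N).filter (fun g : ℕ => ¬ (g:ℝ) ≤ y), ((g:ℝ)^(j+2))⁻¹
              ≤ ∑ g ∈ (Icc 1 N).filter (fun g : ℕ => y ≤ (g:ℝ)), ((g:ℝ)^(j+2))⁻¹ := by
                apply Finset.sum_le_sum_of_subset_of_nonneg
                · intro g hg
                  simp only [mem_filter, mem_Icc] at hg ⊢
                  exact ⟨hg.1, le_of_lt (lt_of_not_ge hg.2)⟩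
                · intro g _ _; positivity
            _ ≤ 2^(j+2) * (y^(j+1))⁻¹ := tail_sum j N hy
      _ = 8^(j+2) * (y^(j+1))⁻¹ := by
          rw [← mul_assoc, show (4:ℝ)^(j+2) * 2^(j+2) = 8^(j+2) by rw [← mul_pow]; norm_num]
  calc _ ≤ 4^(j+2) * (y^(j+1))⁻¹ + 8^(j+2) * (y^(j+1))⁻¹ := add_le_add part1 part2
    _ ≤ 2 * 8^(j+2) * (y^(j+1))⁻¹ := by
        have h48 : (4:ℝ)^(j+2) ≤ 8^(j+2) := pow_le_pow_left₀ (by norm_num) (by norm_num) _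
        have : (0:ℝ) ≤ (y^(j+1))⁻¹ := by positivity
        nlinarith

/-! ### Divisor counting -/

lemma lcm_pow_dvd {d1 d2 n k : ℕ} (hd1 : 0 < d1) (_hd2 : 0 < d2)
    (h1 : d1 ^ k ∣ n) (h2 : d2 ^ k ∣ n) : Nat.lcm d1 d2 ^ k ∣ n := by
  set g := Nat.gcd d1 d2 with hgdef
  have hg : 0 < g := Nat.gcd_pos_of_pos_left _ hd1
  set a := d1 / g with ha
  set bb := d2 / g with hb
  have cop : Nat.Coprime a bb := Nat.coprime_div_gcd_div_gcd hg
  have hd1e : d1 = g * a := (Nat.mul_div_cancel' (Nat.gcd_dvd_left d1 d2)).symm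
  have hd2e : d2 = g * bb := (Nat.mul_div_cancel' (Nat.gcd_dvd_right d1 d2)).symm
  have hlcm : Nat.lcm d1 d2 = g * a * bb := by
    apply Nat.eq_of_mul_eq_mul_left hg
    have h := Nat.gcd_mul_lcm d1 d2
    rw [← hgdef] at h
    rw [h]
    have e3 : d1 * d2 = (g * a) * (g * bb) := by rw [← hd1e, ← hd2e]
    rw [e3]
    ring
  obtain ⟨m, hm⟩ := h1
  have h2' : g ^ k * bb ^ k ∣ g ^ k * (a ^ k * m) := by
    have : d2 ^ k ∣ d1 ^ k * m := hm ▸ h2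
    rw [hd1e, hd2e] at this
    calc g ^ k * bb ^ k = (g * bb) ^ k := (mul_pow g bb k).symm
      _ ∣ (g * a) ^ k * m := this
      _ = g ^ k * (a ^ k * m) := by rw [mul_pow]; ring
  have hbk : bb ^ k ∣ a ^ k * m :=
    (Nat.mul_dvd_mul_iff_left (pow_pos hg k)).mp h2'
  have hbm : bb ^ k ∣ m := (Nat.Coprime.pow k k cop.symm).dvd_of_dvd_mul_left hbk
  rw [hlcm, hm]
  calc (g * a * bb) ^ k = d1 ^ k * bb ^ k := by rw [← hd1e, mul_pow]
    _ ∣ d1 ^ k * m := mul_dvd_mul_left _ hbm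

lemma count_div (N m : ℕ) :
    ((((Icc 1 N).filter (fun n => m ∣ n)).card : ℝ)) ≤ (N:ℝ) * ((m:ℝ))⁻¹ := by
  have h : Icc 1 N = Ioc 0 N := rfl
  rw [h]
  rw [Nat.Ioc_filter_dvd_card_eq_div, ← div_eq_mul_inv]
  exact Nat.cast_div_le

open Classical in
lemma card_sq_to_double (k N : ℕ) {y : ℝ} :
    ∑ n ∈ Icc 1 N, (((Icc 1 N).filter (fun d : ℕ => y ≤ (d:ℝ) ∧ d ^ k ∣ n)).card : ℝ) ^ 2
    ≤ ∑ p ∈ ((Icc 1 N) ×ˢ (Icc 1 N)).filter (fun p : ℕ×ℕ => y ≤ (p.1:ℝ) ∧ y ≤ (p.2:ℝ)),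
      (N:ℝ) * (((Nat.lcm p.1 p.2 : ℕ):ℝ)^k)⁻¹ := by
  classical
  have expand : ∑ n ∈ Icc 1 N,
      (((Icc 1 N).filter (fun d : ℕ => y ≤ (d:ℝ) ∧ d ^ k ∣ n)).card : ℝ) ^ 2
      = ∑ d1 ∈ Icc 1 N, ∑ d2 ∈ Icc 1 N,
          ((((Icc 1 N).filter (fun n : ℕ =>
            (y ≤ (d1:ℝ) ∧ d1 ^ k ∣ n) ∧ (y ≤ (d2:ℝ) ∧ d2 ^ k ∣ n))).card : ℝ)) := by
    have h1 : ∀ n : ℕ, (((Icc 1 N).filter (fun d : ℕ => y ≤ (d:ℝ) ∧ d ^ k ∣ n)).card : ℝ)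
        = ∑ d ∈ Icc 1 N, if y ≤ (d:ℝ) ∧ d ^ k ∣ n then (1:ℝ) else 0 := by
      intro n; rw [Finset.sum_boole]
    calc ∑ n ∈ Icc 1 N,
        (((Icc 1 N).filter (fun d : ℕ => y ≤ (d:ℝ) ∧ d ^ k ∣ n)).card : ℝ) ^ 2
        = ∑ n ∈ Icc 1 N, ∑ d1 ∈ Icc 1 N, ∑ d2 ∈ Icc 1 N,
            (if (y ≤ (d1:ℝ) ∧ d1 ^ k ∣ n) ∧ (y ≤ (d2:ℝ) ∧ d2 ^ k ∣ n) then (1:ℝ) else 0) := by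
          apply Finset.sum_congr rfl
          intro n _
          rw [h1 n, sq, Finset.sum_mul_sum]
          apply Finset.sum_congr rfl; intro d1 _
          apply Finset.sum_congr rfl; intro d2 _
          split_ifs <;> first | tauto | norm_num
      _ = ∑ d1 ∈ Icc 1 N, ∑ d2 ∈ Icc 1 N, ∑ n ∈ Icc 1 N,
            (if (y ≤ (d1:ℝ) ∧ d1 ^ k ∣ n) ∧ (y ≤ (d2:ℝ) ∧ d2 ^ k ∣ n) then (1:ℝ) else 0) := by
          rw [Finset.sum_comm]
          apply Finset.sum_congr rfl
          intro d1 _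
          rw [Finset.sum_comm]
      _ = ∑ d1 ∈ Icc 1 N, ∑ d2 ∈ Icc 1 N,
            ((((Icc 1 N).filter (fun n : ℕ =>
              (y ≤ (d1:ℝ) ∧ d1 ^ k ∣ n) ∧ (y ≤ (d2:ℝ) ∧ d2 ^ k ∣ n))).card : ℝ)) := by
          apply Finset.sum_congr rfl; intro d1 _
          apply Finset.sum_congr rfl; intro d2 _
          rw [Finset.sum_boole]
  rw [expand]
  have bound : ∀ d1 ∈ Icc 1 N, ∀ d2 ∈ Icc 1 N,
      ((((Icc 1 N).filter (fun n : ℕ =>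
        (y ≤ (d1:ℝ) ∧ d1 ^ k ∣ n) ∧ (y ≤ (d2:ℝ) ∧ d2 ^ k ∣ n))).card : ℝ))
      ≤ if y ≤ (d1:ℝ) ∧ y ≤ (d2:ℝ) then (N:ℝ) * (((Nat.lcm d1 d2 : ℕ):ℝ)^k)⁻¹ else 0 := by
    intro d1 hd1 d2 hd2
    simp only [mem_Icc] at hd1 hd2
    split_ifs with hcond
    · have hsub : (Icc 1 N).filter (fun n : ℕ =>
          (y ≤ (d1:ℝ) ∧ d1 ^ k ∣ n) ∧ (y ≤ (d2:ℝ) ∧ d2 ^ k ∣ n))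
          ⊆ (Icc 1 N).filter (fun n : ℕ => Nat.lcm d1 d2 ^ k ∣ n) := by
        intro n hn
        simp only [mem_filter] at hn ⊢
        exact ⟨hn.1, lcm_pow_dvd hd1.1 hd2.1 hn.2.1.2 hn.2.2.2⟩
      calc ((((Icc 1 N).filter (fun n : ℕ =>
            (y ≤ (d1:ℝ) ∧ d1 ^ k ∣ n) ∧ (y ≤ (d2:ℝ) ∧ d2 ^ k ∣ n))).card : ℝ))
          ≤ ((((Icc 1 N).filter (fun n : ℕ => Nat.lcm d1 d2 ^ k ∣ n)).card : ℝ)) := by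
            exact_mod_cast Finset.card_le_card hsub
        _ ≤ (N:ℝ) * (((Nat.lcm d1 d2 ^ k : ℕ)):ℝ)⁻¹ := count_div N _
        _ = (N:ℝ) * (((Nat.lcm d1 d2 : ℕ):ℝ)^k)⁻¹ := by push_cast; ring
    · have : (Icc 1 N).filter (fun n : ℕ =>
          (y ≤ (d1:ℝ) ∧ d1 ^ k ∣ n) ∧ (y ≤ (d2:ℝ) ∧ d2 ^ k ∣ n)) = ∅ := by
        apply Finset.filter_false_of_mem
        intro n _
        intro hn
        exact hcond ⟨hn.1.1, hn.2.1⟩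
      rw [this]
      norm_num
  calc ∑ d1 ∈ Icc 1 N, ∑ d2 ∈ Icc 1 N,
        ((((Icc 1 N).filter (fun n : ℕ =>
          (y ≤ (d1:ℝ) ∧ d1 ^ k ∣ n) ∧ (y ≤ (d2:ℝ) ∧ d2 ^ k ∣ n))).card : ℝ))
      ≤ ∑ d1 ∈ Icc 1 N, ∑ d2 ∈ Icc 1 N,
        (if y ≤ (d1:ℝ) ∧ y ≤ (d2:ℝ) then (N:ℝ) * (((Nat.lcm d1 d2 : ℕ):ℝ)^k)⁻¹ else 0) := by
        apply Finset.sum_le_sum; intro d1 hd1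
        apply Finset.sum_le_sum; intro d2 hd2
        exact bound d1 hd1 d2 hd2
    _ = ∑ p ∈ ((Icc 1 N) ×ˢ (Icc 1 N)).filter (fun p : ℕ×ℕ => y ≤ (p.1:ℝ) ∧ y ≤ (p.2:ℝ)),
        (N:ℝ) * (((Nat.lcm p.1 p.2 : ℕ):ℝ)^k)⁻¹ := by
        rw [Finset.sum_filter, Finset.sum_product]

lemma lcm_decomp {d1 d2 : ℕ} (hd1 : 0 < d1) :
    Nat.lcm d1 d2 = Nat.gcd d1 d2 * (d1 / Nat.gcd d1 d2) * (d2 / Nat.gcd d1 d2) := by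
  have hg : 0 < Nat.gcd d1 d2 := Nat.gcd_pos_of_pos_left _ hd1
  apply Nat.eq_of_mul_eq_mul_left hg
  have h := Nat.gcd_mul_lcm d1 d2
  rw [h]
  have e1 : d1 = Nat.gcd d1 d2 * (d1 / Nat.gcd d1 d2) :=
    (Nat.mul_div_cancel' (Nat.gcd_dvd_left d1 d2)).symm
  have e2 : d2 = Nat.gcd d1 d2 * (d2 / Nat.gcd d1 d2) :=
    (Nat.mul_div_cancel' (Nat.gcd_dvd_right d1 d2)).symm
  have e3 : d1 * d2 = (Nat.gcd d1 d2 * (d1 / Nat.gcd d1 d2))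
      * (Nat.gcd d1 d2 * (d2 / Nat.gcd d1 d2)) := by rw [← e1, ← e2]
  rw [e3]
  ring

open Classical in
lemma double_to_triple (k N : ℕ) {y : ℝ} :
    ∑ p ∈ ((Icc 1 N) ×ˢ (Icc 1 N)).filter (fun p : ℕ×ℕ => y ≤ (p.1:ℝ) ∧ y ≤ (p.2:ℝ)),
      (N:ℝ) * (((Nat.lcm p.1 p.2 : ℕ):ℝ)^k)⁻¹
    ≤ (N:ℝ) * ∑ g ∈ Icc 1 N, ((g:ℝ)^k)⁻¹ *
        (∑ a ∈ Icc 1 N, (if y ≤ (g:ℝ)*(a:ℝ) then ((a:ℝ)^k)⁻¹ else 0)) *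
        (∑ b2 ∈ Icc 1 N, (if y ≤ (g:ℝ)*(b2:ℝ) then ((b2:ℝ)^k)⁻¹ else 0)) := by
  classical
  set P := ((Icc 1 N) ×ˢ (Icc 1 N)).filter (fun p : ℕ×ℕ => y ≤ (p.1:ℝ) ∧ y ≤ (p.2:ℝ)) with hP
  set T := ((Icc 1 N) ×ˢ ((Icc 1 N) ×ˢ (Icc 1 N))).filter
    (fun t : ℕ×ℕ×ℕ => y ≤ (t.1:ℝ)*(t.2.1:ℝ) ∧ y ≤ (t.1:ℝ)*(t.2.2:ℝ)) with hT
  set G : ℕ×ℕ×ℕ → ℝ := fun t => (N:ℝ) * (((t.1:ℝ)*(t.2.1:ℝ)*(t.2.2:ℝ))^k)⁻¹ with hG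
  set φ : ℕ×ℕ → ℕ×ℕ×ℕ := fun p =>
    (Nat.gcd p.1 p.2, p.1 / Nat.gcd p.1 p.2, p.2 / Nat.gcd p.1 p.2) with hφ
  have memP : ∀ p ∈ P, (1 ≤ p.1 ∧ p.1 ≤ N) ∧ (1 ≤ p.2 ∧ p.2 ≤ N)
      ∧ y ≤ (p.1:ℝ) ∧ y ≤ (p.2:ℝ) := by
    intro p hp
    simp only [hP, mem_filter, mem_product, mem_Icc] at hp
    exact ⟨hp.1.1, hp.1.2, hp.2⟩
  have hrec : ∀ p ∈ P, p.1 = (φ p).1 * (φ p).2.1 ∧ p.2 = (φ p).1 * (φ p).2.2 := by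
    intro p hp
    exact ⟨(Nat.mul_div_cancel' (Nat.gcd_dvd_left p.1 p.2)).symm,
      (Nat.mul_div_cancel' (Nat.gcd_dvd_right p.1 p.2)).symm⟩
  have hinj : ∀ p ∈ P, ∀ q ∈ P, φ p = φ q → p = q := by
    intro p hp q hq hpq
    have h1 := hrec p hp
    have h2 := hrec q hq
    have : p.1 = q.1 ∧ p.2 = q.2 := by
      constructor
      · rw [h1.1, h2.1, hpq]
      · rw [h1.2, h2.2, hpq]
    exact Prod.ext this.1 this.2
  have hmaps : ∀ p ∈ P, φ p ∈ T := by
    intro p hp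
    obtain ⟨⟨hp11, hp1N⟩, ⟨hp21, hp2N⟩, hy1, hy2⟩ := memP p hp
    have hg : 0 < Nat.gcd p.1 p.2 := Nat.gcd_pos_of_pos_left _ hp11
    have ha : 0 < p.1 / Nat.gcd p.1 p.2 :=
      Nat.div_pos (Nat.le_of_dvd hp11 (Nat.gcd_dvd_left _ _)) hg
    have hb : 0 < p.2 / Nat.gcd p.1 p.2 :=
      Nat.div_pos (Nat.le_of_dvd hp21 (Nat.gcd_dvd_right _ _)) hg
    have hr := hrec p hp
    simp only [hT, mem_filter, mem_product, mem_Icc]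
    refine ⟨⟨⟨hg, ?_⟩, ⟨ha, ?_⟩, ⟨hb, ?_⟩⟩, ?_, ?_⟩
    · exact le_trans (Nat.le_of_dvd hp11 (Nat.gcd_dvd_left _ _)) hp1N
    · exact le_trans (Nat.div_le_self _ _) hp1N
    · exact le_trans (Nat.div_le_self _ _) hp2N
    · have : ((φ p).1 * (φ p).2.1 : ℕ) = p.1 := (hr.1).symm
      calc y ≤ (p.1:ℝ) := hy1
        _ = (((φ p).1 * (φ p).2.1 : ℕ) : ℝ) := by rw [this]
        _ = ((φ p).1 : ℝ) * ((φ p).2.1 : ℝ) := by push_cast; ring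
    · have : ((φ p).1 * (φ p).2.2 : ℕ) = p.2 := (hr.2).symm
      calc y ≤ (p.2:ℝ) := hy2
        _ = (((φ p).1 * (φ p).2.2 : ℕ) : ℝ) := by rw [this]
        _ = ((φ p).1 : ℝ) * ((φ p).2.2 : ℝ) := by push_cast; ring
  have hval : ∀ p ∈ P, (N:ℝ) * (((Nat.lcm p.1 p.2 : ℕ):ℝ)^k)⁻¹ = G (φ p) := by
    intro p hp
    obtain ⟨⟨hp11, _⟩, _, _, _⟩ := memP p hp
    have := lcm_decomp (d2 := p.2) hp11
    rw [hG]
    simp only [hφ]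
    rw [this]
    push_cast
    ring_nf
  have hGnn : ∀ t ∈ T, 0 ≤ G t := by
    intro t _
    rw [hG]
    positivity
  have step1 : ∑ p ∈ P, (N:ℝ) * (((Nat.lcm p.1 p.2 : ℕ):ℝ)^k)⁻¹ ≤ ∑ t ∈ T, G t := by
    calc ∑ p ∈ P, (N:ℝ) * (((Nat.lcm p.1 p.2 : ℕ):ℝ)^k)⁻¹
        = ∑ p ∈ P, G (φ p) := Finset.sum_congr rfl hval
      _ = ∑ t ∈ P.image φ, G t := (Finset.sum_image hinj).symm
      _ ≤ ∑ t ∈ T, G t := by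
          apply Finset.sum_le_sum_of_subset_of_nonneg _ (fun t ht _ => hGnn t ht)
          intro t ht
          obtain ⟨p, hp, rfl⟩ := Finset.mem_image.mp ht
          exact hmaps p hp
  have step2 : ∑ t ∈ T, G t = (N:ℝ) * ∑ g ∈ Icc 1 N, ((g:ℝ)^k)⁻¹ *
      (∑ a ∈ Icc 1 N, (if y ≤ (g:ℝ)*(a:ℝ) then ((a:ℝ)^k)⁻¹ else 0)) *
      (∑ b2 ∈ Icc 1 N, (if y ≤ (g:ℝ)*(b2:ℝ) then ((b2:ℝ)^k)⁻¹ else 0)) := by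
    rw [hT, Finset.sum_filter, Finset.sum_product]
    rw [Finset.mul_sum]
    apply Finset.sum_congr rfl
    intro g _
    rw [Finset.sum_product]
    have : ∀ a ∈ Icc 1 N, ∀ b2 ∈ Icc 1 N,
        (if y ≤ (g:ℝ)*(a:ℝ) ∧ y ≤ (g:ℝ)*(b2:ℝ) then G (g, a, b2) else 0)
        = (N:ℝ) * (((g:ℝ)^k)⁻¹ *
            ((if y ≤ (g:ℝ)*(a:ℝ) then ((a:ℝ)^k)⁻¹ else 0) *
             (if y ≤ (g:ℝ)*(b2:ℝ) then ((b2:ℝ)^k)⁻¹ else 0))) := by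
      intro a _ b2 _
      by_cases hA : y ≤ (g:ℝ)*(a:ℝ) <;> by_cases hB : y ≤ (g:ℝ)*(b2:ℝ) <;>
          simp [hA, hB, hG, mul_pow, mul_inv] <;> first | exact Or.inl (by ring) | ring
    calc ∑ a ∈ Icc 1 N, ∑ b2 ∈ Icc 1 N,
          (if y ≤ (g:ℝ)*(a:ℝ) ∧ y ≤ (g:ℝ)*(b2:ℝ) then G (g, a, b2) else 0)
        = ∑ a ∈ Icc 1 N, ∑ b2 ∈ Icc 1 N, (N:ℝ) * (((g:ℝ)^k)⁻¹ *
            ((if y ≤ (g:ℝ)*(a:ℝ) then ((a:ℝ)^k)⁻¹ else 0) *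
             (if y ≤ (g:ℝ)*(b2:ℝ) then ((b2:ℝ)^k)⁻¹ else 0))) := by
          apply Finset.sum_congr rfl; intro a ha
          apply Finset.sum_congr rfl; intro b2 hb2
          exact this a ha b2 hb2
      _ = (N:ℝ) * (((g:ℝ)^k)⁻¹ *
            (∑ a ∈ Icc 1 N, (if y ≤ (g:ℝ)*(a:ℝ) then ((a:ℝ)^k)⁻¹ else 0)) *
            (∑ b2 ∈ Icc 1 N, (if y ≤ (g:ℝ)*(b2:ℝ) then ((b2:ℝ)^k)⁻¹ else 0))) := by
          simp only [Finset.mul_sum, Finset.sum_mul]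
          apply Finset.sum_congr rfl; intro a _
          apply Finset.sum_congr rfl; intro b2 _
          ring
  calc ∑ p ∈ P, (N:ℝ) * (((Nat.lcm p.1 p.2 : ℕ):ℝ)^k)⁻¹ ≤ ∑ t ∈ T, G t := step1
    _ = _ := step2

/-! ### Bounding `b` by a divisor count -/

open Classical in
lemma b_sq_le (k N n : ℕ) (hn : n ∈ Icc 1 N) (y z : ℝ) :
    ((b k y z n : ℝ))^2
      ≤ (((Icc 1 N).filter (fun d : ℕ => y ≤ (d:ℝ) ∧ d ^ k ∣ n)).card : ℝ)^2 := by
  simp only [mem_Icc] at hn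
  have habs : |b k y z n|
      ≤ (((Icc 1 N).filter (fun d : ℕ => y ≤ (d:ℝ) ∧ d ^ k ∣ n)).card : ℤ) := by
    rw [b]
    calc |∑ d ∈ (Finset.Icc 1 n).filter
            (fun d : ℕ => y ≤ (d : ℝ) ∧ (d : ℝ) < z ∧ d ^ k ∣ n),
          ArithmeticFunction.moebius d|
        ≤ ∑ d ∈ (Finset.Icc 1 n).filter
            (fun d : ℕ => y ≤ (d : ℝ) ∧ (d : ℝ) < z ∧ d ^ k ∣ n),
          |ArithmeticFunction.moebius d| := Finset.abs_sum_le_sum_abs _ _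
      _ ≤ ∑ d ∈ (Finset.Icc 1 n).filter
            (fun d : ℕ => y ≤ (d : ℝ) ∧ (d : ℝ) < z ∧ d ^ k ∣ n), 1 := by
          apply Finset.sum_le_sum
          intro d _
          by_cases hd : Squarefree d
          · rw [ArithmeticFunction.abs_moebius_eq_one_of_squarefree hd]
          · rw [ArithmeticFunction.moebius_eq_zero_of_not_squarefree hd]
            norm_num
      _ = (((Finset.Icc 1 n).filter
            (fun d : ℕ => y ≤ (d : ℝ) ∧ (d : ℝ) < z ∧ d ^ k ∣ n)).card : ℤ) := by
          rw [Finset.sum_const]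
          simp
      _ ≤ (((Icc 1 N).filter (fun d : ℕ => y ≤ (d:ℝ) ∧ d ^ k ∣ n)).card : ℤ) := by
          have hsub : (Finset.Icc 1 n).filter
              (fun d : ℕ => y ≤ (d : ℝ) ∧ (d : ℝ) < z ∧ d ^ k ∣ n)
              ⊆ (Icc 1 N).filter (fun d : ℕ => y ≤ (d:ℝ) ∧ d ^ k ∣ n) := by
            intro d hd
            simp only [mem_filter, mem_Icc] at hd ⊢
            exact ⟨⟨hd.1.1, le_trans hd.1.2 hn.2⟩, hd.2.1, hd.2.2.2⟩
          exact_mod_cast Finset.card_le_card hsub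
  have h2 : |(b k y z n : ℝ)|
      ≤ (((Icc 1 N).filter (fun d : ℕ => y ≤ (d:ℝ) ∧ d ^ k ∣ n)).card : ℝ) := by
    rw [show |(b k y z n : ℝ)| = ((|b k y z n| : ℤ) : ℝ) by push_cast; ring]
    exact_mod_cast habs
  calc ((b k y z n : ℝ))^2 = |(b k y z n : ℝ)|^2 := (sq_abs _).symm
    _ ≤ (((Icc 1 N).filter (fun d : ℕ => y ≤ (d:ℝ) ∧ d ^ k ∣ n)).card : ℝ)^2 :=
        pow_le_pow_left₀ (abs_nonneg _) h2 2

/-! ### Main theorem -/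

theorem Tstar_L2_bound (k : ℕ) (hk : 2 ≤ k) :
    ∃ C : ℝ, 0 < C ∧ ∀ N : ℕ, 2 ≤ N → ∀ H h : ℕ,
      (N : ℝ) ^ (1 / (k : ℝ)) ≤ (2 : ℝ) ^ H →
      (2 : ℝ) ^ H < 2 * (N : ℝ) ^ (1 / (k : ℝ)) →
      (N : ℝ) ^ (1 / ((k : ℝ) + 1)) < (2 : ℝ) ^ h →
      (2 : ℝ) ^ h ≤ 2 * (N : ℝ) ^ (1 / ((k : ℝ) + 1)) →
      (∫ α in (0:ℝ)..1, ‖Tstar k N h H α‖ ^ 2)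
        ≤ C * (N : ℝ) ^ (2 / ((k : ℝ) + 1)) := by
  obtain ⟨j, rfl⟩ : ∃ j, k = j + 2 := ⟨k - 2, by omega⟩
  refine ⟨2 * 8 ^ (j+2), by positivity, ?_⟩
  intro N hN H h h1 h2 h3 h4
  classical
  set y : ℝ := (2:ℝ)^h with hydef
  set z : ℝ := (2:ℝ)^H with hzdef
  have hy1 : (1:ℝ) ≤ y := one_le_pow₀ (by norm_num)
  have hN0 : (0:ℝ) < (N:ℝ) := by
    have : (2:ℝ) ≤ (N:ℝ) := by exact_mod_cast hN
    linarith
  -- Parseval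
  have hpar : (∫ α in (0:ℝ)..1, ‖Tstar (j+2) N h H α‖ ^ 2)
      = ∑ n ∈ Icc 1 N, ((b (j+2) y z n : ℝ))^2 := by
    have hps := parseval N (fun n => ((b (j+2) y z n : ℤ) : ℂ))
    simp only [Tstar]
    rw [← hydef, ← hzdef, hps]
    apply Finset.sum_congr rfl
    intro n _
    rw [show ((b (j+2) y z n : ℤ) : ℂ) = (((b (j+2) y z n : ℤ) : ℝ) : ℂ) by push_cast; ring]
    rw [Complex.norm_real, Real.norm_eq_abs, sq_abs]
  rw [hpar]
  -- chain of estimates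
  have chain : ∑ n ∈ Icc 1 N, ((b (j+2) y z n : ℝ))^2
      ≤ 2 * 8^(j+2) * ((N:ℝ) * (y^(j+1))⁻¹) := by
    calc ∑ n ∈ Icc 1 N, ((b (j+2) y z n : ℝ))^2
        ≤ ∑ n ∈ Icc 1 N,
            (((Icc 1 N).filter (fun d : ℕ => y ≤ (d:ℝ) ∧ d ^ (j+2) ∣ n)).card : ℝ)^2 :=
          Finset.sum_le_sum (fun n hn => b_sq_le (j+2) N n hn y z)
      _ ≤ ∑ p ∈ ((Icc 1 N) ×ˢ (Icc 1 N)).filter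
            (fun p : ℕ×ℕ => y ≤ (p.1:ℝ) ∧ y ≤ (p.2:ℝ)),
          (N:ℝ) * (((Nat.lcm p.1 p.2 : ℕ):ℝ)^(j+2))⁻¹ := card_sq_to_double (j+2) N
      _ ≤ (N:ℝ) * ∑ g ∈ Icc 1 N, ((g:ℝ)^(j+2))⁻¹ *
            (∑ a ∈ Icc 1 N, (if y ≤ (g:ℝ)*(a:ℝ) then ((a:ℝ)^(j+2))⁻¹ else 0)) *
            (∑ b2 ∈ Icc 1 N, (if y ≤ (g:ℝ)*(b2:ℝ) then ((b2:ℝ)^(j+2))⁻¹ else 0)) :=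
          double_to_triple (j+2) N
      _ ≤ (N:ℝ) * (2 * 8^(j+2) * (y^(j+1))⁻¹) :=
          mul_le_mul_of_nonneg_left (triple_sum_le j N hy1) hN0.le
      _ = 2 * 8^(j+2) * ((N:ℝ) * (y^(j+1))⁻¹) := by ring
  -- final rpow computation
  have hfin : (N:ℝ) * (y^(j+1))⁻¹ ≤ (N:ℝ) ^ (2 / (((j+2:ℕ):ℝ) + 1)) := by
    set c : ℝ := 1 / (((j+2:ℕ):ℝ) + 1) with hc
    set w : ℝ := (N:ℝ) ^ c with hw
    have hw0 : 0 < w := Real.rpow_pos_of_pos hN0 _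
    have hyw : w ≤ y := le_of_lt h3
    have hp : w^(j+1) ≤ y^(j+1) := pow_le_pow_left₀ hw0.le hyw _
    have hinv : (y^(j+1))⁻¹ ≤ (w^(j+1))⁻¹ := inv_anti₀ (by positivity) hp
    have hwp : w^(j+1) = (N:ℝ) ^ (c * ((j+1:ℕ):ℝ)) := by
      rw [hw, ← Real.rpow_natCast ((N:ℝ) ^ c) (j+1), ← Real.rpow_mul hN0.le]
    have hkey : (N:ℝ) * (w^(j+1))⁻¹ = (N:ℝ) ^ (2 / (((j+2:ℕ):ℝ) + 1)) := by
      rw [hwp, ← Real.rpow_neg hN0.le]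
      nth_rewrite 1 [show (N:ℝ) = (N:ℝ) ^ (1:ℝ) by rw [Real.rpow_one]]
      rw [← Real.rpow_add hN0]
      congr 1
      have hne : (((j+2:ℕ):ℝ) + 1) ≠ 0 := by push_cast; positivity
      rw [hc]
      push_cast
      push_cast at hne
      field_simp
      ring
    calc (N:ℝ) * (y^(j+1))⁻¹ ≤ (N:ℝ) * (w^(j+1))⁻¹ :=
          mul_le_mul_of_nonneg_left hinv hN0.le
      _ = (N:ℝ) ^ (2 / (((j+2:ℕ):ℝ) + 1)) := hkey
  calc ∑ n ∈ Icc 1 N, ((b (j+2) y z n : ℝ))^2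
      ≤ 2 * 8^(j+2) * ((N:ℝ) * (y^(j+1))⁻¹) := chain
    _ ≤ 2 * 8^(j+2) * (N:ℝ) ^ (2 / (((j+2:ℕ):ℝ) + 1)) := by
        apply mul_le_mul_of_nonneg_left hfin (by positivity)
end

section
/- Let k ≥ 2 be an integer. There is a constant C = C(k) > 0 such that for all real K ≥ 1, all integers N ≥ 1, M with 1 ≤ M ≤ N+K, all integers d with 1 ≤ d ≤ N+K, and all real α, the congruence-restricted kernel E_{N,K,M,d}(α) = ∑_{|n| ≤ N+K, n ≡ M (mod d)} min(1, (N+K−|n|)/K) e(αn) satisfies |E_{N,K,M,d}(α)| ≤ C · (min((N+K)/d, 1/‖dα‖, d/(K‖dα‖²)) + 1), with the convention that the minimum is (N+K)/d when dα ∈ ℤ. -/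
/-- Distance from `x` to the nearest integer. -/
noncomputable def nint (x : ℝ) : ℝ := |x - (round x : ℤ)|

lemma e_norm (x : ℝ) : ‖e x‖ = 1 := by
  simp only [e, Complex.norm_exp]
  have : (2 * (Real.pi:ℂ) * Complex.I * (x:ℂ)).re = 0 := by
    simp [Complex.mul_re, Complex.mul_im]
  rw [this, Real.exp_zero]

lemma e_add (x y : ℝ) : e (x + y) = e x * e y := by
  rw [e, e, e, ← Complex.exp_add]; push_cast; ring_nf

lemma e_int (m : ℤ) : e m = 1 := by
  rw [e]
  rw [show (2 * (Real.pi:ℂ) * Complex.I * ((m:ℝ):ℂ) : ℂ) = (m:ℂ) * (2 * Real.pi * Complex.I) by push_cast; ring]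
  exact Complex.exp_int_mul_two_pi_mul_I m

lemma e_int_mul (x : ℝ) (m : ℤ) : e (x * m) = (e x) ^ m := by
  rw [e, e, ← Complex.exp_int_mul]
  congr 1; push_cast; ring

lemma e_ne_zero (x : ℝ) : e x ≠ 0 := Complex.exp_ne_zero _

lemma nint_le_half (x : ℝ) : nint x ≤ 1/2 := abs_sub_round x

lemma nint_nonneg (x : ℝ) : 0 ≤ nint x := abs_nonneg _

lemma norm_one_sub_e (β : ℝ) : 4 * nint β ≤ ‖1 - e β‖ := by
  set θ : ℝ := β - (round β : ℤ) with hθ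
  have he : e β = e θ := by
    have hβ : β = θ + ((round β : ℤ) : ℝ) := by ring
    rw [hβ, e_add, e_int, mul_one]
  have hθh : |θ| ≤ 1/2 := abs_sub_round β
  have hnint : nint β = |θ| := rfl
  rw [he, hnint]
  have h1 : e θ = Complex.exp ((2 * Real.pi * θ : ℝ) * Complex.I) := by
    rw [e]; push_cast; ring_nf
  rw [h1, Complex.exp_mul_I]
  have h2 : (1 : ℂ) - (Complex.cos (2*Real.pi*θ:ℝ) + Complex.sin (2*Real.pi*θ:ℝ) * Complex.I)
      = ((1 - Real.cos (2*Real.pi*θ) : ℝ) : ℂ) + ((- Real.sin (2*Real.pi*θ) : ℝ):ℂ) * Complex.I := by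
    rw [← Complex.ofReal_cos, ← Complex.ofReal_sin]; push_cast; ring
  rw [h2, Complex.norm_add_mul_I]
  have hc2 : Real.cos (2*Real.pi*θ) = 1 - 2 * Real.sin (Real.pi*θ)^2 := by
    rw [show 2*Real.pi*θ = 2*(Real.pi*θ) by ring, Real.cos_two_mul',
      ← Real.sin_sq_add_cos_sq (Real.pi*θ)]; ring
  have hpy := Real.sin_sq_add_cos_sq (2*Real.pi*θ)
  have hsq : (1 - Real.cos (2*Real.pi*θ))^2 + (- Real.sin (2*Real.pi*θ))^2
      = (2 * |Real.sin (Real.pi * θ)|)^2 := by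
    have habs : |Real.sin (Real.pi*θ)|^2 = Real.sin (Real.pi*θ)^2 := sq_abs _
    nlinarith [hpy, hc2, habs]
  rw [hsq, Real.sqrt_sq (by positivity)]
  -- now: 4 * |θ| ≤ 2 * |sin (π θ)|
  have hsin : 2 * |θ| ≤ |Real.sin (Real.pi * θ)| := by
    have h0 : Real.sin (Real.pi * |θ|) ≤ |Real.sin (Real.pi * θ)| := by
      rcases abs_cases θ with ⟨h, _⟩ | ⟨h, _⟩
      · rw [h]; exact le_abs_self _
      · rw [h, show Real.pi * -θ = -(Real.pi * θ) by ring, Real.sin_neg]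
        exact neg_le_abs _
    have h1 : 2 / Real.pi * (Real.pi * |θ|) ≤ Real.sin (Real.pi * |θ|) :=
      Real.mul_le_sin (by positivity) (by nlinarith [Real.pi_pos, abs_nonneg θ, hθh])
    have h2 : 2 / Real.pi * (Real.pi * |θ|) = 2 * |θ| := by
      field_simp
    linarith
  linarith

-- telescoping sum over Int.Icc
lemma telescope (f : ℤ → ℝ) (a : ℤ) : ∀ b : ℤ, a - 1 ≤ b →
    ∑ m ∈ Finset.Icc a b, (f m - f (m-1)) = f b - f (a-1) := by
  refine Int.le_induction ?_ ?_
  · rw [Finset.Icc_eq_empty (by omega)]; simp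
  · intro b hb ih
    rw [show Finset.Icc a (b+1) = insert (b+1) (Finset.Icc a b) by
      ext x; simp only [Finset.mem_Icc, Finset.mem_insert]; omega]
    rw [Finset.sum_insert (by simp [Finset.mem_Icc]), ih]
    ring_nf

-- shift identity
lemma shift_sum (φ : ℤ → ℝ) (z : ℂ) (hz : z ≠ 0) (a b : ℤ) (hab : a ≤ b)
    (ha : φ (a-1) = 0) (hb : φ b = 0) :
    (1 - z) * ∑ m ∈ Finset.Icc a b, (φ m : ℂ) * z^m
      = ∑ m ∈ Finset.Icc a b, ((φ m - φ (m-1) : ℝ) : ℂ) * z^m := by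
  have key : ∑ m ∈ Finset.Icc a b, (φ m : ℂ) * z^(m+1)
      = ∑ m ∈ Finset.Icc a b, (φ (m-1) : ℂ) * z^m := by
    have h1 : ∑ m ∈ Finset.Icc a b, (φ m : ℂ) * z^(m+1)
        = ∑ m ∈ Finset.Icc (a+1) (b+1), (φ (m-1) : ℂ) * z^m := by
      rw [← Finset.map_add_right_Icc a b 1, Finset.sum_map]
      simp [addRightEmbedding]
    rw [h1]
    have h2 : ∑ m ∈ Finset.Icc (a+1) (b+1), (φ (m-1) : ℂ) * z^m
        = ∑ m ∈ Finset.Icc a (b+1), (φ (m-1) : ℂ) * z^m := by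
      apply Finset.sum_subset
      · intro x; simp [Finset.mem_Icc]; omega
      · intro x hx hx'
        have : x = a := by simp [Finset.mem_Icc] at hx hx' ⊢; omega
        simp [this, ha]
    have h3 : ∑ m ∈ Finset.Icc a b, (φ (m-1) : ℂ) * z^m
        = ∑ m ∈ Finset.Icc a (b+1), (φ (m-1) : ℂ) * z^m := by
      apply Finset.sum_subset
      · intro x; simp [Finset.mem_Icc]; omega
      · intro x hx hx'
        have : x = b + 1 := by simp [Finset.mem_Icc] at hx hx' ⊢; omega
        simp [this, hb]
    rw [h2, ← h3]
  rw [sub_mul, one_mul, Finset.mul_sum]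
  have : ∀ m : ℤ, z * ((φ m : ℂ) * z^m) = (φ m : ℂ) * z^(m+1) := by
    intro m; rw [zpow_add_one₀ hz]; ring
  simp_rw [this, key, ← Finset.sum_sub_distrib]
  congr 1; ext m; push_cast; ring

noncomputable def wfun (X K t : ℝ) : ℝ := max 0 (min 1 ((X - |t|)/K))

lemma wfun_nonneg (X K t : ℝ) : 0 ≤ wfun X K t := le_max_left _ _

lemma wfun_le_one (X K t : ℝ) : wfun X K t ≤ 1 := by
  rw [wfun]; apply max_le (by norm_num) (min_le_left _ _)

lemma wfun_mono_neg {X K s t : ℝ} (hK : 0 < K) (hst : s ≤ t) (ht : t ≤ 0) :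
    wfun X K s ≤ wfun X K t := by
  have : |t| ≤ |s| := by rw [abs_of_nonpos ht, abs_of_nonpos (hst.trans ht)]; linarith
  apply max_le_max le_rfl
  apply min_le_min le_rfl
  exact (div_le_div_iff_of_pos_right hK).mpr (by linarith)

lemma wfun_anti_pos {X K s t : ℝ} (hK : 0 < K) (hs : 0 ≤ s) (hst : s ≤ t) :
    wfun X K t ≤ wfun X K s := by
  have : |s| ≤ |t| := by rw [abs_of_nonneg hs, abs_of_nonneg (hs.trans hst)]; exact hst
  apply max_le_max le_rfl
  apply min_le_min le_rfl
  exact (div_le_div_iff_of_pos_right hK).mpr (by linarith)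

lemma wfun_eq_zero {X K t : ℝ} (hK : 0 < K) (ht : X < |t|) : wfun X K t = 0 := by
  rw [wfun, max_eq_left]
  apply (min_le_right _ _).trans
  apply le_of_lt
  apply div_neg_of_neg_of_pos (by linarith) hK

lemma wfun_ramp {X K : ℝ} (hK : 0 < K) (hKX : K ≤ X) (t : ℝ) :
    K * wfun X K t = max (t+X) 0 - max (t+(X-K)) 0 - max (t-(X-K)) 0 + max (t-X) 0 := by
  have h1 : K * wfun X K t = max 0 (min K (X - |t|)) := by
    rw [wfun, mul_max_of_nonneg _ _ hK.le, mul_min_of_nonneg _ _ hK.le, mul_one,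
      mul_zero, mul_div_cancel₀ _ hK.ne']
  rw [h1]
  rcases abs_cases t with ⟨ha, ht⟩ | ⟨ha, ht⟩ <;> rw [ha] <;>
    simp only [max_def, min_def] <;> split_ifs <;> linarith

lemma ramp_diff_mono {d u v : ℝ} (hd : 0 ≤ d) (h : u ≤ v) :
    max (u+d) 0 - max u 0 ≤ max (v+d) 0 - max v 0 := by
  rcases max_cases (u+d) 0 with ⟨h1,h1'⟩|⟨h1,h1'⟩ <;>
  rcases max_cases u 0 with ⟨h2,h2'⟩|⟨h2,h2'⟩ <;>
  rcases max_cases (v+d) 0 with ⟨h3,h3'⟩|⟨h3,h3'⟩ <;>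
  rcases max_cases v 0 with ⟨h4,h4'⟩|⟨h4,h4'⟩ <;>
  rw [h1, h2, h3, h4] <;> linarith

lemma ramp_diff_nonneg {d u : ℝ} (hd : 0 ≤ d) : 0 ≤ max (u+d) 0 - max u 0 := by
  rcases max_cases (u+d) 0 with ⟨h1,h1'⟩|⟨h1,h1'⟩ <;>
  rcases max_cases u 0 with ⟨h2,h2'⟩|⟨h2,h2'⟩ <;>
  rw [h1, h2] <;> linarith

lemma ramp_diff_le {d u : ℝ} (hd : 0 ≤ d) : max (u+d) 0 - max u 0 ≤ d := by
  rcases max_cases (u+d) 0 with ⟨h1,h1'⟩|⟨h1,h1'⟩ <;>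
  rcases max_cases u 0 with ⟨h2,h2'⟩|⟨h2,h2'⟩ <;>
  rw [h1, h2] <;> linarith

open Classical in
/-- The congruence-restricted smoothed kernel
`E_{N,K,M,d}(α) = ∑_{|n| ≤ N+K, n ≡ M (mod d)} min(1, (N+K-|n|)/K) e(αn)`. -/
noncomputable def Eker (N : ℕ) (K : ℝ) (M d : ℤ) (α : ℝ) : ℂ :=
  ∑ n ∈ (Finset.Icc (-(⌊(N : ℝ) + K⌋)) ⌊(N : ℝ) + K⌋).filter
      (fun n : ℤ => d ∣ (n - M)),
    ((min 1 (((N : ℝ) + K - |(n : ℝ)|) / K) : ℝ) : ℂ) * e (α * (n : ℝ))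

set_option maxHeartbeats 1600000 in
open Classical in
theorem congruence_kernel_bound (k : ℕ) (hk : 2 ≤ k) :
    ∃ C : ℝ, 0 < C ∧ ∀ K : ℝ, 1 ≤ K → ∀ N : ℕ, 1 ≤ N → ∀ M d : ℤ,
      1 ≤ M → (M : ℝ) ≤ (N : ℝ) + K → 1 ≤ d → (d : ℝ) ≤ (N : ℝ) + K → ∀ α : ℝ,
      ‖Eker N K M d α‖ ≤ C *
        ((if ∃ z : ℤ, (d : ℝ) * α = (z : ℝ) then ((N : ℝ) + K) / (d : ℝ)
          else min (((N : ℝ) + K) / (d : ℝ))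
            (min (1 / nint ((d : ℝ) * α))
              ((d : ℝ) / (K * nint ((d : ℝ) * α) ^ 2)))) + 1) := by
  refine ⟨4, by norm_num, ?_⟩
  intro K hK N hN M d hM1 hMX hd1 hdX α
  set X : ℝ := (N : ℝ) + K with hX
  set L : ℤ := ⌊X⌋ with hL
  have hK0 : (0:ℝ) < K := by linarith
  have hN1 : (1:ℝ) ≤ (N:ℝ) := by exact_mod_cast hN
  have hX2 : (2:ℝ) ≤ X := by rw [hX]; linarith
  have hKX : K ≤ X := by rw [hX]; linarith
  have hL2 : 2 ≤ L := by rw [hL]; exact Int.le_floor.mpr (by norm_num; linarith)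
  have hLX : (L:ℝ) ≤ X := Int.floor_le X
  have hXL : X < (L:ℝ) + 1 := by exact_mod_cast Int.lt_floor_add_one X
  have hd0 : (0:ℤ) < d := hd1
  have hd0' : (0:ℝ) < (d:ℝ) := by exact_mod_cast hd1
  have hd1' : (1:ℝ) ≤ (d:ℝ) := by exact_mod_cast hd1
  have hML : M ≤ L := Int.le_floor.mpr hMX
  have hdL : d ≤ L := Int.le_floor.mpr hdX
  have hM0' : (1:ℝ) ≤ (M:ℝ) := by exact_mod_cast hM1
  set β : ℝ := (d:ℝ) * α with hβ
  set z : ℂ := e β with hz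
  set φ : ℤ → ℝ := fun m => wfun X K ((M:ℝ) + (d:ℝ)*(m:ℝ)) with hφ
  set a : ℤ := -(2*L+3) with ha
  set b : ℤ := 2*L+3 with hb
  have hab : a ≤ b := by omega
  set S : ℂ := ∑ m ∈ Finset.Icc a b, (φ m : ℂ) * z^m with hS
  -- support of φ
  have habs : ∀ m : ℤ, ((M:ℝ) + (d:ℝ)*(m:ℝ)) = ((M + d*m : ℤ) : ℝ) := by
    intro m; push_cast; ring
  have hsupp : ∀ m : ℤ, 2*L+2 ≤ |m| → φ m = 0 := by
    intro m hm
    have hda : |d| = d := abs_of_pos hd0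
    have h1 : |m| ≤ |d * m| := by
      rw [abs_mul, hda]
      exact le_mul_of_one_le_left (abs_nonneg _) hd1
    have h2 : |d * m| ≤ |M + d*m| + |M| := by
      have := abs_sub_abs_le_abs_sub (d*m) (-M)
      have h3 : |(-M : ℤ)| = |M| := abs_neg M
      have h4 : d*m - (-M) = M + d*m := by ring
      rw [h4, h3] at this
      linarith [abs_nonneg (d*m), neg_abs_le (d*m)]
    have h5 : |M| = M := abs_of_pos (by omega)
    have h6 : L + 2 ≤ |M + d*m| := by omega
    apply wfun_eq_zero hK0
    rw [habs m, ← Int.cast_abs]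
    have : ((L:ℝ)) + 2 ≤ ((|M + d*m| : ℤ) : ℝ) := by exact_mod_cast h6
    linarith
  -- the kernel equals e(αM) * S
  have hEk : Eker N K M d α = e (α * (M:ℝ)) * S := by
    rw [Eker, hS, Finset.mul_sum, ← hX, ← hL]
    have step1 : ∑ m ∈ Finset.Icc a b, e (α*(M:ℝ)) * ((φ m : ℂ) * z^m)
        = ∑ m ∈ (Finset.Icc a b).filter (fun m => M + d*m ∈ Finset.Icc (-L) L),
            e (α*(M:ℝ)) * ((φ m : ℂ) * z^m) := by
      symm
      apply Finset.sum_subset (Finset.filter_subset _ _)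
      intro x hx hx'
      have hnot : ¬ (M + d*x ∈ Finset.Icc (-L) L) := by
        intro hmem
        exact hx' (Finset.mem_filter.mpr ⟨hx, hmem⟩)
      rw [Finset.mem_Icc] at hnot
      push_neg at hnot
      have h7 : L + 1 ≤ |M + d*x| := by
        rcases lt_or_ge (M + d*x) (-L) with h | h
        · rw [abs_of_neg (by omega)]; omega
        · have := hnot h; rw [abs_of_pos (by omega)]; omega
      have hφx : φ x = 0 := by
        apply wfun_eq_zero hK0
        rw [habs x, ← Int.cast_abs]
        have : ((L:ℝ)) + 1 ≤ ((|M + d*x| : ℤ):ℝ) := by exact_mod_cast h7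
        linarith
      simp [hφx]
    rw [step1]
    refine Finset.sum_nbij' (fun n => (n - M)/d) (fun m => M + d*m) ?_ ?_ ?_ ?_ ?_
    · intro n hn
      rw [Finset.mem_filter, Finset.mem_Icc] at hn
      obtain ⟨⟨hn1, hn2⟩, q, hq⟩ := hn.imp id id
      have hq' : (n - M)/d = q := by rw [hq]; exact Int.mul_ediv_cancel_left q (by omega)
      have hda : |d| = d := abs_of_pos hd0
      have h1' : |q| ≤ |d * q| := by
        rw [abs_mul, hda]; exact le_mul_of_one_le_left (abs_nonneg _) hd1
      have h8 : |d * q| ≤ 2*L := by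
        rw [← hq]; apply abs_le.mpr ⟨by omega, by omega⟩
      have h9 := abs_le.mp (h1'.trans h8)
      rw [Finset.mem_filter, Finset.mem_Icc, hq']
      refine ⟨⟨by omega, by omega⟩, ?_⟩
      rw [Finset.mem_Icc]
      have hMq : M + d*q = n := by omega
      rw [hMq]; exact ⟨hn1, hn2⟩
    · intro m hm
      rw [Finset.mem_filter] at hm ⊢
      exact ⟨hm.2, ⟨m, by ring⟩⟩
    · intro n hn
      rw [Finset.mem_filter] at hn
      obtain ⟨q, hq⟩ := hn.2
      rw [hq, Int.mul_ediv_cancel_left q (by omega)]; omega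
    · intro m _
      rw [show M + d*m - M = d*m by ring, Int.mul_ediv_cancel_left m (by omega)]
    · intro n hn
      rw [Finset.mem_filter, Finset.mem_Icc] at hn
      obtain ⟨⟨hn1, hn2⟩, q, hq⟩ := hn.imp id id
      have hq' : (n - M)/d = q := by rw [hq]; exact Int.mul_ediv_cancel_left q (by omega)
      rw [hq']
      have hMq : M + d*q = n := by omega
      have hnq : (M:ℝ) + (d:ℝ)*(q:ℝ) = (n:ℝ) := by exact_mod_cast congrArg (Int.cast : ℤ → ℝ) hMq
      have hnL : |(n:ℝ)| ≤ (L:ℝ) := by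
        rw [← Int.cast_abs]
        have : |n| ≤ L := abs_le.mpr ⟨hn1, hn2⟩
        exact_mod_cast this
      have hφq : φ q = min 1 ((X - |(n:ℝ)|)/K) := by
        show wfun X K ((M:ℝ) + (d:ℝ)*(q:ℝ)) = _
        rw [hnq, wfun, max_eq_right]
        exact le_min zero_le_one (div_nonneg (by linarith) hK0.le)
      have hexp : e (α * (n:ℝ)) = e (α*(M:ℝ)) * z^q := by
        rw [← hnq, show α * ((M:ℝ) + (d:ℝ)*(q:ℝ)) = α*(M:ℝ) + β*(q:ℝ) by rw [hβ]; ring,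
          e_add, e_int_mul, e_int_mul, hz]
      rw [hφq, hexp]; push_cast; ring
  have hnorm : ‖Eker N K M d α‖ = ‖S‖ := by
    rw [hEk, norm_mul, e_norm, one_mul]
  -- trivial bound
  have hS1 : ‖S‖ ≤ 2*X/(d:ℝ) + 1 := by
    set c₁ : ℤ := ⌈(-X - (M:ℝ))/(d:ℝ)⌉ with hc₁
    set c₂ : ℤ := ⌊(X - (M:ℝ))/(d:ℝ)⌋ with hc₂
    have hbound : ∀ m : ℤ, m ∉ Finset.Icc c₁ c₂ → φ m = 0 := by
      intro m hm
      rw [Finset.mem_Icc] at hm; push_neg at hm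
      apply wfun_eq_zero hK0
      rcases lt_or_ge m c₁ with h | h
      · have h1 : ((m:ℝ)) < (-X - M)/d := by exact_mod_cast Int.lt_ceil.mp h
        rw [lt_div_iff₀ hd0'] at h1
        have h2 : (M:ℝ) + (d:ℝ)*(m:ℝ) < -X := by nlinarith
        rw [abs_of_nonpos (by linarith)]; linarith
      · have h1 : (X - M)/d < ((m:ℝ)) := by exact_mod_cast Int.floor_lt.mp (hm h)
        rw [div_lt_iff₀ hd0'] at h1
        have h2 : X < (M:ℝ) + (d:ℝ)*(m:ℝ) := by nlinarith
        rw [abs_of_pos (by linarith)]; linarith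
    have hnormS : ‖S‖ ≤ ∑ m ∈ Finset.Icc a b, |φ m| := by
      rw [hS]
      refine (norm_sum_le _ _).trans ?_
      apply Finset.sum_le_sum
      intro m _
      rw [norm_mul, norm_zpow, hz, e_norm, one_zpow, mul_one, Complex.norm_real,
        Real.norm_eq_abs]
    have hres : ∑ m ∈ Finset.Icc a b, |φ m| = ∑ m ∈ Finset.Icc a b ∩ Finset.Icc c₁ c₂, |φ m| := by
      symm; apply Finset.sum_subset Finset.inter_subset_left
      intro x hx hx'
      have hx2 : x ∉ Finset.Icc c₁ c₂ := fun hxc => hx' (Finset.mem_inter.mpr ⟨hx, hxc⟩)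
      rw [hbound x hx2, abs_zero]
    have hcard : ∑ m ∈ Finset.Icc a b ∩ Finset.Icc c₁ c₂, |φ m|
        ≤ ((Finset.Icc c₁ c₂).card : ℝ) := by
      calc ∑ m ∈ Finset.Icc a b ∩ Finset.Icc c₁ c₂, |φ m|
          ≤ ∑ _m ∈ Finset.Icc a b ∩ Finset.Icc c₁ c₂, (1:ℝ) := by
            apply Finset.sum_le_sum
            intro m _
            rw [abs_of_nonneg (wfun_nonneg _ _ _)]
            exact wfun_le_one _ _ _
        _ = ((Finset.Icc a b ∩ Finset.Icc c₁ c₂).card : ℝ) := by simp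
        _ ≤ ((Finset.Icc c₁ c₂).card : ℝ) := by
            exact_mod_cast Finset.card_le_card Finset.inter_subset_right
    have hfin : ((Finset.Icc c₁ c₂).card : ℝ) ≤ 2*X/(d:ℝ) + 1 := by
      rw [Int.card_Icc]
      rcases le_or_gt (c₂ + 1 - c₁) 0 with h | h
      · rw [Int.toNat_of_nonpos h]
        norm_num
        positivity
      · have h0 : ((c₂ + 1 - c₁).toNat : ℝ) = (c₂:ℝ) + 1 - (c₁:ℝ) := by
          have h1 := Int.toNat_of_nonneg h.le
          exact_mod_cast congrArg (Int.cast : ℤ → ℝ) h1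
        rw [h0]
        have e1 : (c₂:ℝ) ≤ (X - M)/d := Int.floor_le _
        have e2 : (-X - M)/d ≤ (c₁:ℝ) := Int.le_ceil _
        have e3 : (X-M)/(d:ℝ) - (-X-M)/(d:ℝ) = 2*X/(d:ℝ) := by
          field_simp; ring
        linarith
    rw [hres] at hnormS
    linarith
  -- support values
  have hzne : z ≠ 0 := by rw [hz]; exact e_ne_zero β
  have hφa1 : φ (a-1) = 0 := by
    apply hsupp; rw [abs_of_nonpos (by omega)]; omega
  have hφa2 : φ (a-2) = 0 := by
    apply hsupp; rw [abs_of_nonpos (by omega)]; omega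
  have hφb : φ b = 0 := by
    apply hsupp; rw [abs_of_nonneg (by omega)]; omega
  have hφb1 : φ (b-1) = 0 := by
    apply hsupp; rw [abs_of_nonneg (by omega)]; omega
  have hnormsum : ∀ (f : ℤ → ℝ), ‖∑ m ∈ Finset.Icc a b, ((f m : ℝ):ℂ) * z^m‖
      ≤ ∑ m ∈ Finset.Icc a b, |f m| := by
    intro f
    refine (norm_sum_le _ _).trans ?_
    apply Finset.sum_le_sum
    intro m _
    rw [norm_mul, norm_zpow, hz, e_norm, one_zpow, mul_one, Complex.norm_real,
      Real.norm_eq_abs]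
  -- the turning point
  set m₀ : ℤ := (-M)/d with hm₀
  have hdiv : d * m₀ + (-M) % d = -M := by rw [hm₀]; exact Int.mul_ediv_add_emod (-M) d
  have hr0 : 0 ≤ (-M) % d := Int.emod_nonneg _ (by omega)
  have hrd : (-M) % d < d := Int.emod_lt_of_pos _ hd0
  have hA : M + d*m₀ ≤ 0 := by linarith
  have hB : 1 ≤ M + d*(m₀+1) := by
    have h1 : d*(m₀+1) = d*m₀ + d := by ring
    linarith
  have hm₀lb : -M ≤ m₀ := by
    have h1 : d*(-M) ≤ 1*(-M) := mul_le_mul_of_nonpos_right hd1 (by omega)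
    have h2 : (d*(-M))/d ≤ (-M)/d := Int.ediv_le_ediv hd0 (by linarith)
    rw [Int.mul_ediv_cancel_left _ (by omega)] at h2
    rw [hm₀]; exact h2
  have hm₀ub : m₀ ≤ -1 := by
    by_contra hcon
    push_neg at hcon
    have h1 : 0 ≤ m₀ := by omega
    have h2 : 0 ≤ d*m₀ := mul_nonneg (by omega) h1
    linarith
  have ham₀ : a ≤ m₀ := by omega
  have hm₀b : m₀ + 2 ≤ b := by omega
  have key1 : ∀ m : ℤ, m ≤ m₀ → (M:ℝ) + (d:ℝ)*(m:ℝ) ≤ 0 := by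
    intro m hm
    have h2 : d*m ≤ d*m₀ := mul_le_mul_of_nonneg_left hm (by omega)
    have h1 : M + d*m ≤ 0 := by linarith
    rw [habs m]; exact_mod_cast h1
  have key2 : ∀ m : ℤ, m₀ + 1 ≤ m → (1:ℝ) ≤ (M:ℝ) + (d:ℝ)*(m:ℝ) := by
    intro m hm
    have h2 : d*(m₀+1) ≤ d*m := mul_le_mul_of_nonneg_left hm (by omega)
    have h1 : 1 ≤ M + d*m := by linarith
    rw [habs m]; exact_mod_cast h1
  have hargmono : ∀ m : ℤ, (M:ℝ) + (d:ℝ)*((m:ℝ)-1) ≤ (M:ℝ) + (d:ℝ)*(m:ℝ) := by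
    intro m; nlinarith [hd0'.le]
  have hcast1 : ∀ m : ℤ, (((m - 1 : ℤ)):ℝ) = (m:ℝ) - 1 := by intro m; push_cast; ring
  -- first-difference bound
  have hSb : ‖(1-z) * S‖ ≤ 3 := by
    rw [hS, shift_sum φ z hzne a b hab hφa1 hφb]
    refine (hnormsum _).trans ?_
    have hsplit : Finset.Icc a b = Finset.Icc a m₀ ∪ Finset.Icc (m₀+1) b := by
      ext x; simp only [Finset.mem_Icc, Finset.mem_union]; omega
    have hdisj : Disjoint (Finset.Icc a m₀) (Finset.Icc (m₀+1) b) := by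
      rw [Finset.disjoint_left]
      intro x hx hx'
      simp only [Finset.mem_Icc] at hx hx'
      omega
    rw [hsplit, Finset.sum_union hdisj]
    have hsplit2 : Finset.Icc (m₀+1) b = insert (m₀+1) (Finset.Icc (m₀+2) b) := by
      ext x; simp only [Finset.mem_Icc, Finset.mem_insert]; omega
    rw [hsplit2, Finset.sum_insert (by simp only [Finset.mem_Icc]; omega)]
    have B1 : ∑ m ∈ Finset.Icc a m₀, |φ m - φ (m-1)| ≤ 1 := by
      have hcong : ∀ m ∈ Finset.Icc a m₀, |φ m - φ (m-1)| = φ m - φ (m-1) := by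
        intro m hm
        rw [Finset.mem_Icc] at hm
        apply abs_of_nonneg
        rw [sub_nonneg, hφ]
        dsimp only
        rw [hcast1 m]
        exact wfun_mono_neg hK0 (hargmono m) (key1 m hm.2)
      rw [Finset.sum_congr rfl hcong, telescope φ a m₀ (by omega), hφa1]
      have := wfun_le_one X K ((M:ℝ) + (d:ℝ)*((m₀:ℤ):ℝ))
      show φ m₀ - 0 ≤ 1
      rw [hφ]; dsimp only; linarith
    have B2 : |φ (m₀+1) - φ (m₀+1-1)| ≤ 1 := by
      apply abs_le.mpr
      constructor
      · have h1 := wfun_nonneg X K ((M:ℝ) + (d:ℝ)*(((m₀+1:ℤ)):ℝ))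
        have h2 := wfun_le_one X K ((M:ℝ) + (d:ℝ)*(((m₀+1-1:ℤ)):ℝ))
        rw [hφ]; dsimp only; linarith
      · have h1 := wfun_le_one X K ((M:ℝ) + (d:ℝ)*(((m₀+1:ℤ)):ℝ))
        have h2 := wfun_nonneg X K ((M:ℝ) + (d:ℝ)*(((m₀+1-1:ℤ)):ℝ))
        rw [hφ]; dsimp only; linarith
    have B3 : ∑ m ∈ Finset.Icc (m₀+2) b, |φ m - φ (m-1)| ≤ 1 := by
      have hcong : ∀ m ∈ Finset.Icc (m₀+2) b, |φ m - φ (m-1)|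
          = (fun m : ℤ => -φ m) m - (fun m : ℤ => -φ m) (m-1) := by
        intro m hm
        rw [Finset.mem_Icc] at hm
        dsimp only
        rw [abs_of_nonpos, neg_sub]
        · ring
        · rw [sub_nonpos, hφ]
          dsimp only
          rw [hcast1 m]
          refine wfun_anti_pos hK0 ?_ (hargmono m)
          have := key2 (m-1) (by omega)
          rw [hcast1 m] at this
          linarith
      rw [Finset.sum_congr rfl hcong, telescope (fun m : ℤ => -φ m) (m₀+2) b (by omega)]
      have h1 := wfun_le_one X K ((M:ℝ) + (d:ℝ)*(((m₀+2-1:ℤ)):ℝ))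
      show -φ b - -φ (m₀+2-1) ≤ 1
      rw [hφb, hφ]; dsimp only; linarith
    linarith
  -- second-difference bound
  have hSc : ‖(1-z)^2 * S‖ ≤ 4*(d:ℝ)/K := by
    set ψ : ℤ → ℝ := fun m => φ m - φ (m-1) with hψ
    have hψa : ψ (a-1) = 0 := by
      rw [hψ]; dsimp only
      rw [show a-1-1 = a-2 by ring, hφa1, hφa2]; ring
    have hψb : ψ b = 0 := by
      rw [hψ]; dsimp only; rw [hφb, hφb1]; ring
    have h2z : (1-z)^2 * S = ∑ m ∈ Finset.Icc a b, ((ψ m - ψ (m-1) : ℝ):ℂ) * z^m := by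
      rw [sq, mul_assoc, hS, shift_sum φ z hzne a b hab hφa1 hφb]
      exact shift_sum ψ z hzne a b hab hψa hψb
    rw [h2z]
    refine (hnormsum _).trans ?_
    -- ramp decomposition
    set g : ℝ → ℤ → ℝ := fun c m => max (c + (d:ℝ)*(m:ℝ)) 0 with hg
    have hgstep : ∀ (c : ℝ) (m : ℤ), g c (m-1) = max (c + (d:ℝ)*((m:ℝ)-1)) 0 := by
      intro c m; rw [hg]; dsimp only; congr 2; push_cast; ring
    have hgshift : ∀ (c : ℝ) (m : ℤ), g c m = max ((c + (d:ℝ)*((m:ℝ)-1)) + (d:ℝ)) 0 := by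
      intro c m; rw [hg]; dsimp only; congr 1; ring
    have hgstep2 : ∀ (c : ℝ) (m : ℤ), g c (m-2) = max (c + (d:ℝ)*((m:ℝ)-2)) 0 := by
      intro c m; rw [hg]; dsimp only; congr 2; push_cast; ring
    have hgshift2 : ∀ (c : ℝ) (m : ℤ), g c (m-1) = max ((c + (d:ℝ)*((m:ℝ)-2)) + (d:ℝ)) 0 := by
      intro c m; rw [hg]; dsimp only; congr 1; push_cast; ring
    have hDnn : ∀ (c : ℝ) (m : ℤ), 0 ≤ g c m - g c (m-1) := by
      intro c m; rw [hgshift, hgstep]; exact ramp_diff_nonneg hd0'.le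
    have hDle : ∀ (c : ℝ) (m : ℤ), g c m - g c (m-1) ≤ (d:ℝ) := by
      intro c m; rw [hgshift, hgstep]; exact ramp_diff_le hd0'.le
    have hDmono : ∀ (c : ℝ) (m : ℤ), g c (m-1) - g c (m-2) ≤ g c m - g c (m-1) := by
      intro c m
      have h := ramp_diff_mono (d := (d:ℝ)) hd0'.le
        (show c + (d:ℝ)*((m:ℝ)-2) ≤ c + (d:ℝ)*((m:ℝ)-1) by nlinarith [hd0'.le])
      calc g c (m-1) - g c (m-2)
          = max ((c + (d:ℝ)*((m:ℝ)-2)) + (d:ℝ)) 0 - max (c + (d:ℝ)*((m:ℝ)-2)) 0 := by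
            rw [hgshift2, hgstep2]
        _ ≤ max ((c + (d:ℝ)*((m:ℝ)-1)) + (d:ℝ)) 0 - max (c + (d:ℝ)*((m:ℝ)-1)) 0 := h
        _ = g c m - g c (m-1) := by rw [← hgshift, ← hgstep]
    set c1 : ℝ := (M:ℝ) + X with hc1
    set c2 : ℝ := (M:ℝ) + (X-K) with hc2
    set c3 : ℝ := (M:ℝ) - (X-K) with hc3
    set c4 : ℝ := (M:ℝ) - X with hc4
    have hKφ : ∀ m : ℤ, K * φ m = g c1 m - g c2 m - g c3 m + g c4 m := by
      intro m
      have hw := wfun_ramp hK0 hKX ((M:ℝ) + (d:ℝ)*(m:ℝ))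
      have e1 : ((M:ℝ) + (d:ℝ)*(m:ℝ)) + X = c1 + (d:ℝ)*(m:ℝ) := by rw [hc1]; ring
      have e2 : ((M:ℝ) + (d:ℝ)*(m:ℝ)) + (X-K) = c2 + (d:ℝ)*(m:ℝ) := by rw [hc2]; ring
      have e3 : ((M:ℝ) + (d:ℝ)*(m:ℝ)) - (X-K) = c3 + (d:ℝ)*(m:ℝ) := by rw [hc3]; ring
      have e4 : ((M:ℝ) + (d:ℝ)*(m:ℝ)) - X = c4 + (d:ℝ)*(m:ℝ) := by rw [hc4]; ring
      rw [e1, e2, e3, e4] at hw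
      rw [hφ]; dsimp only
      rw [hw, hg]
    -- pointwise second-difference bound
    have hpoint : ∀ m : ℤ, |ψ m - ψ (m-1)| ≤
        ((g c1 m - g c1 (m-1)) - (g c1 (m-1) - g c1 (m-2))
        + ((g c2 m - g c2 (m-1)) - (g c2 (m-1) - g c2 (m-2)))
        + ((g c3 m - g c3 (m-1)) - (g c3 (m-1) - g c3 (m-2)))
        + ((g c4 m - g c4 (m-1)) - (g c4 (m-1) - g c4 (m-2))))/K := by
      intro m
      have hid : K * (ψ m - ψ (m-1)) =
          ((g c1 m - g c1 (m-1)) - (g c1 (m-1) - g c1 (m-2)))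
          - ((g c2 m - g c2 (m-1)) - (g c2 (m-1) - g c2 (m-2)))
          - ((g c3 m - g c3 (m-1)) - (g c3 (m-1) - g c3 (m-2)))
          + ((g c4 m - g c4 (m-1)) - (g c4 (m-1) - g c4 (m-2))) := by
        have q1 := hKφ m
        have q2 := hKφ (m-1)
        have q3 := hKφ (m-2)
        rw [hψ]; dsimp only
        rw [show m-1-1 = m-2 by ring]
        nlinarith [q1, q2, q3]
      have hnn1 := hDmono c1 m; have hnn2 := hDmono c2 m
      have hnn3 := hDmono c3 m; have hnn4 := hDmono c4 m
      rw [le_div_iff₀ hK0]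
      have habsK : |ψ m - ψ (m-1)| * K = |K * (ψ m - ψ (m-1))| := by
        rw [abs_mul, abs_of_pos hK0]; ring
      rw [habsK, hid]
      apply abs_le.mpr
      constructor <;> linarith
    have hsum : ∀ c : ℝ, ∑ m ∈ Finset.Icc a b,
        ((g c m - g c (m-1)) - (g c (m-1) - g c (m-2))) ≤ (d:ℝ) := by
      intro c
      have hcongr : ∀ m ∈ Finset.Icc a b, ((g c m - g c (m-1)) - (g c (m-1) - g c (m-2)))
          = (fun m => g c m - g c (m-1)) m - (fun m => g c m - g c (m-1)) (m-1) := by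
        intro m _
        dsimp only
        rw [show m-1-1 = m-2 by ring]
      rw [Finset.sum_congr rfl hcongr, telescope (fun m => g c m - g c (m-1)) a b (by omega)]
      have h1 := hDle c b
      have h2 := hDnn c (a-1)
      linarith
    calc ∑ m ∈ Finset.Icc a b, |ψ m - ψ (m-1)|
        ≤ ∑ m ∈ Finset.Icc a b,
          ((g c1 m - g c1 (m-1)) - (g c1 (m-1) - g c1 (m-2))
          + ((g c2 m - g c2 (m-1)) - (g c2 (m-1) - g c2 (m-2)))
          + ((g c3 m - g c3 (m-1)) - (g c3 (m-1) - g c3 (m-2)))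
          + ((g c4 m - g c4 (m-1)) - (g c4 (m-1) - g c4 (m-2))))/K :=
          Finset.sum_le_sum (fun m _ => hpoint m)
      _ = (∑ m ∈ Finset.Icc a b,
          ((g c1 m - g c1 (m-1)) - (g c1 (m-1) - g c1 (m-2))
          + ((g c2 m - g c2 (m-1)) - (g c2 (m-1) - g c2 (m-2)))
          + ((g c3 m - g c3 (m-1)) - (g c3 (m-1) - g c3 (m-2)))
          + ((g c4 m - g c4 (m-1)) - (g c4 (m-1) - g c4 (m-2)))))/K := by
          rw [Finset.sum_div]
      _ ≤ 4*(d:ℝ)/K := by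
          have htot : ∑ m ∈ Finset.Icc a b,
              ((g c1 m - g c1 (m-1)) - (g c1 (m-1) - g c1 (m-2))
              + ((g c2 m - g c2 (m-1)) - (g c2 (m-1) - g c2 (m-2)))
              + ((g c3 m - g c3 (m-1)) - (g c3 (m-1) - g c3 (m-2)))
              + ((g c4 m - g c4 (m-1)) - (g c4 (m-1) - g c4 (m-2)))) ≤ 4*(d:ℝ) := by
            rw [Finset.sum_add_distrib, Finset.sum_add_distrib, Finset.sum_add_distrib]
            have s1 := hsum c1
            have s2 := hsum c2
            have s3 := hsum c3
            have s4 := hsum c4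
            linarith
          gcongr
  -- conclusion
  have hXd0 : 0 < X/(d:ℝ) := by positivity
  rw [hnorm]
  split_ifs with hint
  · have : 2*X/(d:ℝ) + 1 ≤ 4 * (X/(d:ℝ) + 1) := by
      rw [mul_div_assoc] at *
      linarith
    linarith
  · -- η > 0
    set η : ℝ := nint β with hη
    have hη0 : 0 < η := by
      rcases lt_or_eq_of_le (nint_nonneg β) with h | h
      · exact h
      · exfalso; apply hint
        refine ⟨round β, ?_⟩
        have : |β - (round β : ℤ)| = 0 := h.symm
        have := abs_eq_zero.mp this
        linarith
    have h1z : 4*η ≤ ‖1 - z‖ := norm_one_sub_e β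
    have hSb' : ‖S‖ ≤ 3/(4*η) := by
      rw [le_div_iff₀ (by positivity)]
      calc ‖S‖ * (4*η) ≤ ‖S‖ * ‖1-z‖ := by
            apply mul_le_mul_of_nonneg_left h1z (norm_nonneg _)
        _ = ‖(1-z)*S‖ := by rw [norm_mul]; ring
        _ ≤ 3 := hSb
    have hSc' : ‖S‖ ≤ (d:ℝ)/(4*K*η^2) := by
      rw [le_div_iff₀ (by positivity)]
      have step : ‖S‖ * (4*K*η^2) * 4 ≤ 4*(d:ℝ) := by
        calc ‖S‖ * (4*K*η^2) * 4 = K * (‖S‖ * (4*η)^2) := by ring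
          _ ≤ K * (‖S‖ * ‖1-z‖^2) := by
              apply mul_le_mul_of_nonneg_left ?_ hK0.le
              apply mul_le_mul_of_nonneg_left ?_ (norm_nonneg _)
              apply pow_le_pow_left₀ (by positivity) h1z
          _ = K * ‖(1-z)^2*S‖ := by rw [norm_mul, norm_pow]; ring
          _ ≤ K * (4*(d:ℝ)/K) := by
              apply mul_le_mul_of_nonneg_left hSc hK0.le
          _ = 4*(d:ℝ) := by field_simp
      linarith
    have hgoal : ∀ t : ℝ, (t = X/(d:ℝ) ∨ t = 1/η ∨ t = (d:ℝ)/(K*η^2)) →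
        min (X/(d:ℝ)) (min (1/η) ((d:ℝ)/(K*η^2))) = t → ‖S‖ ≤ 4 * (t + 1) := by
      intro t ht hmin
      rcases ht with h | h | h
      · rw [h]
        have : 2*X/(d:ℝ) ≤ 4*(X/(d:ℝ)) := by rw [mul_div_assoc] at *; linarith
        linarith
      · rw [h]
        have h2 : 3/(4*η) ≤ 1/η := by
          rw [div_le_div_iff₀ (by positivity) hη0]; nlinarith
        have h3 : 0 ≤ 1/η := by positivity
        linarith
      · rw [h]
        have h2 : (d:ℝ)/(4*K*η^2) ≤ (d:ℝ)/(K*η^2) := by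
          apply div_le_div_of_nonneg_left (by positivity) (by positivity) (by nlinarith)
        have h3 : 0 ≤ (d:ℝ)/(K*η^2) := by positivity
        linarith
    rcases min_cases (X/(d:ℝ)) (min (1/η) ((d:ℝ)/(K*η^2))) with ⟨h, _⟩ | ⟨h, _⟩
    · rw [h]; exact hgoal (X/(d:ℝ)) (Or.inl rfl) h
    · rcases min_cases (1/η) ((d:ℝ)/(K*η^2)) with ⟨h2, _⟩ | ⟨h2, _⟩
      · rw [h, h2]; exact hgoal (1/η) (Or.inr (Or.inl rfl)) (h.trans h2)
      · rw [h, h2]; exact hgoal ((d:ℝ)/(K*η^2)) (Or.inr (Or.inr rfl)) (h.trans h2)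
end
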